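/- arXiv:1410.1948 — 8 statements merged into one kernel-verified Lean document; each statement's English description precedes it below -/
import Mathlib

section
/- Let k be a commutative ring, R a k-algebra with a topology, and X an affine k-scheme. Then the affine topology and the fine topology on X(R) coincide. -/
open AlgebraicGeometry CategoryTheory CategoryTheory.Limits Opposite TopologicalSpace

universe u

noncomputable section

/-- The affine topology on the set of `k`-algebra homomorphisms `A →ₐ[k] R`:
the coarsest topology making all evaluation maps `f ↦ f a` continuous. -/
def affineTopology (k A R : Type*) [CommRing k] [CommRing A] [CommRing R]
    [Algebra k A] [Algebra k R] [TopologicalSpace R] :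
    TopologicalSpace (A →ₐ[k] R) :=
  TopologicalSpace.induced (fun f (a : A) => f a) Pi.topologicalSpace

namespace SchemePoints

variable (k R : Type u) [CommRing k] [CommRing R] [Algebra k R]

/-- `Spec R` as a scheme over `Spec k`. -/
def specOver : Over (Spec (CommRingCat.of k)) :=
  Over.mk (Spec.map (CommRingCat.ofHom (algebraMap k R)))

/-- The set `X(R)` of `R`-rational points of a `k`-scheme `X`, i.e. morphisms
`Spec R ⟶ X` over `Spec k`. -/
def pts (X : Over (Spec (CommRingCat.of k))) : Type u :=
  specOver k R ⟶ X

/-- Evaluation of a global section of `X` at an `R`-rational point. -/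
def ev [TopologicalSpace R] (X : Over (Spec (CommRingCat.of k))) (g : pts k R X)
    (a : Γ(X.left, ⊤)) : R :=
  (Scheme.ΓSpecIso (CommRingCat.of R)).hom (Scheme.Hom.appTop ((Over.forget _).map g) a)

/-- The affine topology on `X(R)`. -/
def affineTop [TopologicalSpace R] (X : Over (Spec (CommRingCat.of k))) :
    TopologicalSpace (pts k R X) :=
  TopologicalSpace.induced (fun g (a : Γ(X.left, ⊤)) => ev k R X g a) Pi.topologicalSpace

/-- The fine topology on `X(R)`: the finest topology such that for every morphism
`U ⟶ X` from an affine `k`-scheme `U`, the induced map `U(R) → X(R)` is continuous,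
where `U(R)` carries the affine topology. -/
def fineTop [TopologicalSpace R] (X : Over (Spec (CommRingCat.of k))) :
    TopologicalSpace (pts k R X) :=
  ⨆ (U : Over (Spec (CommRingCat.of k))) (_ : IsAffine U.left) (φ : U ⟶ X),
    (affineTop k R U).coinduced (fun g => g ≫ φ)

end SchemePoints

open SchemePoints

/-- for an affine `k`-scheme `X` and a `k`-algebra `R` with a topology, the
affine topology and the fine topology on `X(R)` coincide. -/
theorem statement_2 (k R : Type u) [CommRing k] [CommRing R] [Algebra k R] [TopologicalSpace R]
    (X : Over (Spec (CommRingCat.of k))) (hX : IsAffine X.left) :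
    affineTop k R X = fineTop k R X := by
  apply le_antisymm
  · unfold fineTop
    refine le_iSup_of_le X (le_iSup_of_le hX (le_iSup_of_le (𝟙 X) ?_))
    simp only [Category.comp_id]
    exact le_of_eq (@coinduced_id _ (affineTop k R X)).symm
  · unfold fineTop
    apply iSup_le; intro U; apply iSup_le; intro hU; apply iSup_le; intro φ
    letI : TopologicalSpace (specOver k R ⟶ U) := affineTop k R U
    letI : TopologicalSpace (specOver k R ⟶ X) := affineTop k R X
    apply continuous_iff_coinduced_le.mp
    apply continuous_induced_rng.2
    apply continuous_pi
    intro a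
    have key : ∀ g : pts k R U, ev k R X (g ≫ φ) a
        = ev k R U g (Scheme.Hom.appTop ((Over.forget _).map φ) a) := by
      intro g
      rfl
    simp only [Function.comp, key]
    have hF : Continuous (fun (g : specOver k R ⟶ U) (a : Γ(U.left, ⊤)) => ev k R U g a) :=
      continuous_induced_dom
    exact (continuous_apply _).comp hF
end
end

section
/- Let k be a commutative ring, X a k-scheme, and f : R → S a continuous k-algebra homomorphism between k-algebras with topologies. Then the induced map f_X : X(R) → X(S), obtained by composing morphisms Spec R → X with Spec S → Spec R, is continuous when both sides carry the fine topology. -/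
open AlgebraicGeometry CategoryTheory CategoryTheory.Limits Opposite TopologicalSpace

universe u

noncomputable section

namespace SchemePoints

variable {k R S : Type u} [CommRing k] [CommRing R] [CommRing S] [Algebra k R] [Algebra k S]

/-- The morphism `Spec S ⟶ Spec R` over `Spec k` induced by a `k`-algebra homomorphism
`f : R → S`. -/
def specOverMap (f : R →ₐ[k] S) : specOver k S ⟶ specOver k R :=
  Over.homMk (Spec.map (CommRingCat.ofHom f.toRingHom)) (by
    dsimp [specOver]
    rw [← Spec.map_comp]
    congr 1
    exact congrArg CommRingCat.ofHom f.comp_algebraMap)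

/-- The induced map `f_X : X(R) → X(S)` obtained by composing a point `Spec R ⟶ X` with
`Spec S ⟶ Spec R`. -/
def ptsBaseChange (f : R →ₐ[k] S) (X : Over (Spec (CommRingCat.of k))) (g : pts k R X) :
    pts k S X :=
  specOverMap f ≫ g

end SchemePoints

open SchemePoints

theorem ev_ptsBaseChange {k R S : Type u} [CommRing k] [CommRing R] [CommRing S]
    [Algebra k R] [Algebra k S] [TopologicalSpace R] [TopologicalSpace S]
    (X : Over (Spec (CommRingCat.of k))) (f : R →ₐ[k] S) (g : pts k R X)
    (a : Γ(X.left, ⊤)) : ev k S X (ptsBaseChange f X g) a = f (ev k R X g a) := by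
  have h2 := congrArg (fun φ => φ (Scheme.Hom.appTop g.left a))
    (Scheme.ΓSpecIso_naturality (R := CommRingCat.of R) (S := CommRingCat.of S)
      (CommRingCat.ofHom f.toRingHom))
  simp only [ev, ptsBaseChange, Over.forget_map, Over.comp_left, specOverMap,
    Over.homMk_left, Scheme.Hom.comp_appTop, CommRingCat.comp_apply]
  exact h2

theorem continuous_ptsBaseChange_affine {k R S : Type u} [CommRing k] [CommRing R] [CommRing S]
    [Algebra k R] [Algebra k S] [TopologicalSpace R] [TopologicalSpace S]
    (X : Over (Spec (CommRingCat.of k))) (f : R →ₐ[k] S) (hf : Continuous f) :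
    @Continuous (pts k R X) (pts k S X) (affineTop k R X) (affineTop k S X)
      (ptsBaseChange f X) := by
  letI : TopologicalSpace (pts k R X) := affineTop k R X
  show @Continuous _ _ _
    (TopologicalSpace.induced (fun g (a : Γ(X.left, ⊤)) => ev k S X g a) Pi.topologicalSpace)
    (ptsBaseChange f X)
  refine continuous_induced_rng.2 (continuous_pi fun a => ?_)
  have hdom : Continuous (fun g (a : Γ(X.left, ⊤)) => ev k R X g a) :=
    continuous_induced_dom
  have heq : (fun g : pts k R X => ev k S X (ptsBaseChange f X g) a) =
      f ∘ (fun g => ev k R X g a) := by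
    funext g; exact ev_ptsBaseChange X f g a
  show Continuous fun g : pts k R X => ev k S X (ptsBaseChange f X g) a
  rw [heq]
  exact hf.comp ((continuous_apply a).comp hdom)

/-- for a `k`-scheme `X` and a continuous `k`-algebra homomorphism `f : R → S`
between `k`-algebras with topologies, the induced map `f_X : X(R) → X(S)` is continuous for
the fine topologies. -/
theorem statement_4 (k R S : Type u) [CommRing k] [CommRing R] [CommRing S]
    [Algebra k R] [Algebra k S] [TopologicalSpace R] [TopologicalSpace S]
    (X : Over (Spec (CommRingCat.of k))) (f : R →ₐ[k] S) (hf : Continuous f) :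
    @Continuous (pts k R X) (pts k S X) (fineTop k R X) (fineTop k S X)
      (ptsBaseChange f X) := by
  rw [fineTop]
  rw [continuous_iSup_dom]
  intro U
  rw [continuous_iSup_dom]
  intro hU
  rw [continuous_iSup_dom]
  intro φ
  refine continuous_coinduced_dom.2 ?_
  have key : (ptsBaseChange f X ∘ fun g => g ≫ φ) =
      (fun g : pts k S U => g ≫ φ) ∘ ptsBaseChange f U := by
    funext g
    exact (Category.assoc _ _ _).symm
  rw [key]
  have h2 : @Continuous (pts k S U) (pts k S X) (affineTop k S U) (fineTop k S X)
      (fun g => g ≫ φ) := by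
    rw [fineTop]
    exact continuous_iSup_rng (i := U) (continuous_iSup_rng (i := hU)
      (continuous_iSup_rng (i := φ) continuous_coinduced_rng))
  exact @Continuous.comp _ _ _ (affineTop k R U) (affineTop k S U) (fineTop k S X) _ _ h2
    (continuous_ptsBaseChange_affine U f hf)
end
end

section
/- Let k be a commutative ring and R a k-algebra that is a topological ring whose topology is Hausdorff. Then every closed immersion φ : Y → X of k-schemes induces a closed topological embedding φ_R : Y(R) → X(R) (a homeomorphism onto a closed subset) with respect to the fine topologies. -/
open AlgebraicGeometry CategoryTheory CategoryTheory.Limits Opposite TopologicalSpace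

universe u

noncomputable section

open SchemePoints Topology

section Aux

variable {k R : Type u} [CommRing k] [CommRing R] [Algebra k R] [TopologicalSpace R]

/-- Evaluation of a composite point. -/
lemma SchemePoints.ev_comp {X Y : Over (Spec (CommRingCat.of k))} (p : X ⟶ Y)
    (g : pts k R X) (a : Γ(Y.left, ⊤)) :
    ev k R Y (g ≫ p) a = ev k R X g (p.left.appTop a) := by
  rfl

/-- Evaluation maps are continuous for the affine topology. -/
lemma SchemePoints.continuous_ev (X : Over (Spec (CommRingCat.of k))) (a : Γ(X.left, ⊤)) :
    @Continuous _ _ (affineTop k R X) _ (fun g => ev k R X g a) := by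
  letI := affineTop k R X
  have h1 : Continuous (fun g : pts k R X => fun a : Γ(X.left, ⊤) => ev k R X g a) :=
    continuous_induced_dom
  exact (continuous_apply a).comp h1

/-- Composition with any morphism from an affine scheme is continuous from the affine
topology to the fine topology. -/
lemma SchemePoints.continuous_comp_fine {U X : Over (Spec (CommRingCat.of k))}
    (hU : IsAffine U.left) (ψ : U ⟶ X) :
    @Continuous _ _ (affineTop k R U) (fineTop k R X) (fun g => g ≫ ψ) := by
  letI := affineTop k R U
  letI := fineTop k R X
  refine continuous_iff_coinduced_le.2 ?_
  exact le_iSup_of_le U (le_iSup_of_le hU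
    (le_iSup (fun φ => (affineTop k R U).coinduced (fun g => g ≫ φ)) ψ))

/-- Composition is continuous for the fine topologies. -/
lemma SchemePoints.continuous_comp_fine' {Y X : Over (Spec (CommRingCat.of k))} (φ : Y ⟶ X) :
    @Continuous _ _ (fineTop k R Y) (fineTop k R X) (fun g => g ≫ φ) := by
  unfold fineTop
  refine continuous_iSup_dom.2 fun U => continuous_iSup_dom.2 fun hU =>
    continuous_iSup_dom.2 fun ψ => continuous_coinduced_dom.2 ?_
  have h : @Continuous _ _ (affineTop k R U) (fineTop k R X)
      (fun g : pts k R U => (g ≫ ψ) ≫ φ) := by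
    letI := affineTop k R U
    letI := fineTop k R X
    exact (continuous_comp_fine hU (ψ ≫ φ)).congr fun g => (Category.assoc _ _ _).symm
  exact h

lemma pi_induced_of_surjective {ι ι' : Type u} {X : Type u} [t : TopologicalSpace X]
    {π : ι' → ι} (hπ : Function.Surjective π) :
    TopologicalSpace.induced (fun (x : ι → X) (a : ι') => x (π a)) Pi.topologicalSpace
      = (Pi.topologicalSpace : TopologicalSpace (ι → X)) := by
  simp only [Pi.topologicalSpace, induced_iInf, induced_compose]
  apply le_antisymm
  · exact le_iInf fun b => by
      obtain ⟨a, rfl⟩ := hπ b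
      exact iInf_le_of_le a le_rfl
  · exact le_iInf fun a => iInf_le_of_le (π a) le_rfl

end Aux

section ClosedEmb

variable {k R : Type u} [CommRing k] [CommRing R] [Algebra k R]
  [TopologicalSpace R] [IsTopologicalRing R] [T2Space R]

set_option linter.unusedSectionVars false in
/-- Key affine lemma: a closed immersion between (relatively) affine schemes over `Spec k`
induces a closed embedding for the affine topologies. -/
lemma SchemePoints.isClosedEmbedding_affine {V U : Over (Spec (CommRingCat.of k))}
    (p : V ⟶ U) (hU : IsAffine U.left) (hp : IsClosedImmersion p.left) :
    @IsClosedEmbedding _ _ (affineTop k R V) (affineTop k R U) (fun g => g ≫ p) := by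
  haveI := hU
  haveI := hp
  obtain ⟨hV, hsurj⟩ := IsClosedImmersion.isAffine_surjective_of_isAffine p.left
  letI tV := affineTop k R V
  letI tU := affineTop k R U
  set π := p.left.appTop with hπ
  -- injectivity
  have hinj : Function.Injective (fun g : pts k R V => g ≫ p) := by
    intro g₁ g₂ h
    apply Over.OverMorphism.ext
    have h' : g₁.left ≫ p.left = g₂.left ≫ p.left := by
      have := congrArg CommaMorphism.left h
      exact this
    rwa [cancel_mono] at h'
  -- inducing
  have hind : tV = TopologicalSpace.induced (fun g : pts k R V => g ≫ p) tU := by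
    show TopologicalSpace.induced _ _ = _
    refine Eq.trans ?_ (induced_compose (f := fun g : pts k R V => g ≫ p)
      (g := fun g (a : Γ(U.left, ⊤)) => ev k R U g a)
      (tγ := Pi.topologicalSpace)).symm
    have : ((fun g (a : Γ(U.left, ⊤)) => ev k R U g a) ∘ (fun g : pts k R V => g ≫ p))
        = (fun (x : Γ(V.left, ⊤) → R) (a : Γ(U.left, ⊤)) => x (π a))
          ∘ (fun g (b : Γ(V.left, ⊤)) => ev k R V g b) := by
      funext g
      funext a
      exact ev_comp p g a
    refine Eq.trans ?_ (congrArg (fun F => TopologicalSpace.induced F Pi.topologicalSpace) this).symm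
    rw [← induced_compose, pi_induced_of_surjective hsurj]
  -- range
  have hrange : Set.range (fun g : pts k R V => g ≫ p)
      = {f : pts k R U | ∀ a : Γ(U.left, ⊤), π a = 0 → ev k R U f a = 0} := by
    ext f
    constructor
    · rintro ⟨h, rfl⟩ a ha
      rw [ev_comp, ← hπ, ha]
      simp [ev]
      exact (congrArg (ConcreteCategory.hom (Scheme.ΓSpecIso (CommRingCat.of R)).hom)
        (map_zero _)).trans (map_zero _)
    · intro hf
      -- build the ring map on global sections
      set ψc : Γ(U.left, ⊤) ⟶ CommRingCat.of R :=
        f.left.appTop ≫ (Scheme.ΓSpecIso (CommRingCat.of R)).hom with hψc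
      have hψev : ∀ a, ψc.hom a = ev k R U f a := fun a => rfl
      have hker : RingHom.ker π.hom
          ≤ RingHom.ker ψc.hom := by
        intro a ha
        rw [RingHom.mem_ker] at ha ⊢
        rw [hψev]
        exact hf a ha
      set χ : Γ(V.left, ⊤) →+* R :=
        RingHom.liftOfRightInverse π.hom
          (Function.surjInv hsurj) (Function.rightInverse_surjInv hsurj)
          ⟨ψc.hom, hker⟩ with hχ
      have hχπ : ∀ a, χ (π a) = ψc.hom a := fun a =>
        RingHom.liftOfRightInverse_comp_apply _ _ _ ⟨ψc.hom, hker⟩ a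
      have hcomp : ((π ≫ CommRingCat.ofHom χ : Γ(U.left, ⊤) ⟶ CommRingCat.of R))
          = ψc := by
        ext a
        exact hχπ a
      -- the scheme morphism
      set h₀ : Spec (CommRingCat.of R) ⟶ V.left :=
        Spec.map (CommRingCat.ofHom χ) ≫ V.left.isoSpec.inv with hh₀
      have hfl : f.left = Spec.map ψc ≫ U.left.isoSpec.inv := by
        refine (Iso.eq_comp_inv _).2 ?_
        have h1 := Scheme.isoSpec_hom_naturality (X := Spec (CommRingCat.of R))
          (Y := U.left) f.left
        rw [Scheme.isoSpec_Spec_hom, ← Spec.map_comp] at h1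
        rw [hψc]
        exact h1.symm
      have hfact : h₀ ≫ p.left = f.left := by
        rw [hh₀, Category.assoc, ← Scheme.isoSpec_inv_naturality, ← Category.assoc,
          ← Spec.map_comp]
        rw [show Scheme.Hom.appTop p.left = π from rfl, hcomp, hfl]
      refine ⟨Over.homMk h₀ ?_, ?_⟩
      · show h₀ ≫ V.hom = (specOver k R).hom
        rw [← Over.w p, ← Category.assoc, hfact]
        exact Over.w f
      · apply Over.OverMorphism.ext
        exact hfact
  -- closedness of the range set
  have hclosed : @IsClosed _ tU (Set.range (fun g : pts k R V => g ≫ p)) := by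
    suffices hs : @IsClosed _ tU
        {f : pts k R U | ∀ a : Γ(U.left, ⊤), π a = 0 → ev k R U f a = 0} from
      (congrArg (fun S => @IsClosed _ tU S) hrange).mpr hs
    have : {f : pts k R U | ∀ a : Γ(U.left, ⊤), π a = 0 → ev k R U f a = 0}
        = ⋂ (a : {a : Γ(U.left, ⊤) // π a = 0}), (fun f => ev k R U f a.1) ⁻¹' {(0 : R)} := by
      ext f
      simp [Set.mem_iInter, Subtype.forall]
    rw [this]
    exact isClosed_iInter fun a =>
      IsClosed.preimage (continuous_ev U a.1) isClosed_singleton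
  exact ⟨⟨⟨hind⟩, hinj⟩, hclosed⟩

end ClosedEmb

/-- if `R` is a `k`-algebra which is a Hausdorff topological ring, then every
closed immersion `φ : Y → X` of `k`-schemes induces a closed topological embedding
`φ_R : Y(R) → X(R)` with respect to the fine topologies. -/
theorem statement_9 (k R : Type u) [CommRing k] [CommRing R] [Algebra k R]
    [TopologicalSpace R] [IsTopologicalRing R] [T2Space R]
    (X Y : Over (Spec (CommRingCat.of k))) (φ : Y ⟶ X) (hφ : IsClosedImmersion φ.left) :
    @IsClosedEmbedding (pts k R Y) (pts k R X) (fineTop k R Y) (fineTop k R X)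
      (fun g => g ≫ φ) := by
  haveI := hφ
  letI tY := fineTop k R Y
  letI tX := fineTop k R X
  refine IsClosedEmbedding.of_continuous_injective_isClosedMap
    (continuous_comp_fine' φ) ?_ ?_
  · intro g₁ g₂ h
    apply Over.OverMorphism.ext
    have h' : g₁.left ≫ φ.left = g₂.left ≫ φ.left := by
      have := congrArg CommaMorphism.left h
      exact this
    rwa [cancel_mono] at h'
  · intro C hC
    show IsClosed[fineTop k R X] _
    unfold fineTop
    rw [isClosed_iSup_iff]
    intro U
    rw [isClosed_iSup_iff]
    intro hU
    rw [isClosed_iSup_iff]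
    intro α
    refine isClosed_coinduced.2 ?_
    haveI := hU
    -- set up the fibre product
    haveI hcl : IsClosedImmersion (pullback.fst α.left φ.left) :=
      inferInstance
    set W' : Over (Spec (CommRingCat.of k)) := Over.mk (pullback.fst α.left φ.left ≫ U.hom)
      with hW'
    haveI hWaff : IsAffine W'.left :=
      (IsClosedImmersion.isAffine_surjective_of_isAffine (pullback.fst α.left φ.left)).1
    set fst' : W' ⟶ U := Over.homMk (pullback.fst α.left φ.left) rfl with hfst'
    have hsnd'w : pullback.snd α.left φ.left ≫ Y.hom = W'.hom := by
      rw [← Over.w φ, ← Category.assoc, ← pullback.condition, Category.assoc, Over.w α]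
      rfl
    set snd' : W' ⟶ Y := Over.homMk (pullback.snd α.left φ.left) hsnd'w with hsnd'
    have hWfst : IsClosedImmersion fst'.left := hcl
    have hkey := isClosedEmbedding_affine (k := k) (R := R) fst' hU hWfst
    have himg : (fun g : pts k R U => g ≫ α) ⁻¹' ((fun g : pts k R Y => g ≫ φ) '' C)
        = (fun h : pts k R W' => h ≫ fst') '' ((fun h : pts k R W' => h ≫ snd') ⁻¹' C) := by
      ext f
      constructor
      · rintro ⟨g, hg, hfg⟩
        have w : f.left ≫ α.left = g.left ≫ φ.left := by
          have := congrArg CommaMorphism.left hfg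
          exact this.symm
        have hw : (pullback.lift f.left g.left w : Spec (CommRingCat.of R) ⟶ W'.left)
            ≫ W'.hom = (specOver k R).hom := by
          show _ ≫ pullback.fst α.left φ.left ≫ U.hom = _
          rw [← Category.assoc]
          exact (congrArg (· ≫ U.hom) (pullback.lift_fst _ _ _)).trans (Over.w f)
        refine ⟨Over.homMk (pullback.lift f.left g.left w) hw, ?_, ?_⟩
        · show _ ≫ snd' ∈ C
          have : Over.homMk (pullback.lift f.left g.left w) hw ≫ snd' = g := by
            apply Over.OverMorphism.ext
            exact pullback.lift_snd _ _ _
          rwa [this]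
        · apply Over.OverMorphism.ext
          exact pullback.lift_fst _ _ _
      · rintro ⟨h, hh, rfl⟩
        refine ⟨h ≫ snd', hh, ?_⟩
        show (h ≫ snd') ≫ φ = (h ≫ fst') ≫ α
        have hq : snd' ≫ φ = fst' ≫ α := by
          apply Over.OverMorphism.ext
          exact pullback.condition.symm
        exact (Category.assoc _ _ _).trans
          ((congrArg (fun q => h ≫ q) hq).trans (Category.assoc _ _ _).symm)
    show IsClosed[affineTop k R U]
      ((fun g : pts k R U => g ≫ α) ⁻¹' ((fun g : pts k R Y => g ≫ φ) '' C))
    refine (congrArg (fun S => IsClosed[affineTop k R U] S) himg).mpr ?_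
    letI := affineTop k R W'
    letI := affineTop k R U
    exact hkey.isClosedMap _ (IsClosed.preimage (continuous_comp_fine hWaff snd') hC)
end
end

section
/- Let k be a commutative ring and R a k-algebra with a topology. Suppose that for all affine k-schemes of finite type: (F1) the canonical bijection (X ×_Z Y)(R) → X(R) ×_{Z(R)} Y(R) is a homeomorphism, (F2) the canonical bijection 𝔸¹_k(R) → R is a homeomorphism, and (F3) every closed immersion Y → X induces a closed topological embedding Y(R) → X(R), all with respect to the affine topology. Then R is a topological ring and its topology is Hausdorff. -/
open AlgebraicGeometry CategoryTheory CategoryTheory.Limits Opposite TopologicalSpace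

set_option maxHeartbeats 1000000
set_option synthInstance.maxHeartbeats 200000

universe u

noncomputable section

namespace SchemePoints

variable {k : Type u} [CommRing k] (R : Type u) [CommRing R] [Algebra k R] [TopologicalSpace R]
variable {X Y Z : Over (Spec (CommRingCat.of k))}

/-- The fibered product `X ×_Z Y` of `k`-schemes, as a `k`-scheme. -/
def fiberProdOver (φ : X ⟶ Z) (ψ : Y ⟶ Z) : Over (Spec (CommRingCat.of k)) :=
  Over.mk (pullback.fst φ.left ψ.left ≫ X.hom)

/-- The first projection `X ×_Z Y ⟶ X` over `Spec k`. -/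
def fiberFst (φ : X ⟶ Z) (ψ : Y ⟶ Z) : fiberProdOver φ ψ ⟶ X :=
  Over.homMk (pullback.fst φ.left ψ.left) rfl

/-- The second projection `X ×_Z Y ⟶ Y` over `Spec k`. -/
def fiberSnd (φ : X ⟶ Z) (ψ : Y ⟶ Z) : fiberProdOver φ ψ ⟶ Y :=
  Over.homMk (pullback.snd φ.left ψ.left) (by
    dsimp [fiberProdOver]
    rw [← Over.w ψ, ← Category.assoc, ← pullback.condition, Category.assoc, Over.w φ])

/-- The canonical map `(X ×_Z Y)(R) → X(R) ×_{Z(R)} Y(R)`. -/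
def fiberCompare (φ : X ⟶ Z) (ψ : Y ⟶ Z) (g : pts k R (fiberProdOver φ ψ)) :
    {p : pts k R X × pts k R Y // p.1 ≫ φ = p.2 ≫ ψ} :=
  ⟨(g ≫ fiberFst φ ψ, g ≫ fiberSnd φ ψ), by
    rw [Category.assoc g, Category.assoc g]
    congr 1
    apply Over.OverMorphism.ext
    exact pullback.condition⟩

/-- The subspace topology of the product topology on the fibered product of point sets
`X(R) ×_{Z(R)} Y(R)`, where `X(R)` and `Y(R)` carry the given topologies. -/
def fiberPtsTop {α β : Type*} (tα : TopologicalSpace α) (tβ : TopologicalSpace β)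
    (p : α × β → Prop) : TopologicalSpace {x : α × β // p x} :=
  TopologicalSpace.induced Subtype.val (@instTopologicalSpaceProd α β tα tβ)

end SchemePoints


namespace SchemePoints

variable {k : Type u} [CommRing k] {R : Type u} [CommRing R] [Algebra k R] [TopologicalSpace R]

/-! ### Basic lemmas about `ev` -/

lemma ev_comp_s10 {X Y : Over (Spec (CommRingCat.of k))} (φ : X ⟶ Y) (g : pts k R X)
    (a : Γ(Y.left, ⊤)) :
    ev k R Y (g ≫ φ) a = ev k R X g (Scheme.Hom.appTop φ.left a) := by
  simp only [ev, Functor.map_comp, Scheme.Hom.comp_appTop, CommRingCat.comp_apply]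
  rfl

lemma ev_mul {X : Over (Spec (CommRingCat.of k))} (g : pts k R X) (a b : Γ(X.left, ⊤)) :
    ev k R X g (a * b) = ev k R X g a * ev k R X g b := by
  show (Scheme.ΓSpecIso (CommRingCat.of R)).hom (Scheme.Hom.appTop g.left (a * b)) = _
  exact map_mul (Scheme.Hom.appTop ((Over.forget _).map g) ≫ (Scheme.ΓSpecIso (CommRingCat.of R)).hom).hom a b

lemma ev_add {X : Over (Spec (CommRingCat.of k))} (g : pts k R X) (a b : Γ(X.left, ⊤)) :
    ev k R X g (a + b) = ev k R X g a + ev k R X g b := by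
  show (Scheme.ΓSpecIso (CommRingCat.of R)).hom (Scheme.Hom.appTop g.left (a + b)) = _
  exact map_add (Scheme.Hom.appTop ((Over.forget _).map g) ≫ (Scheme.ΓSpecIso (CommRingCat.of R)).hom).hom a b

lemma ev_neg {X : Over (Spec (CommRingCat.of k))} (g : pts k R X) (a : Γ(X.left, ⊤)) :
    ev k R X g (-a) = - ev k R X g a := by
  show (Scheme.ΓSpecIso (CommRingCat.of R)).hom (Scheme.Hom.appTop g.left (-a)) = _
  exact map_neg (Scheme.Hom.appTop ((Over.forget _).map g) ≫ (Scheme.ΓSpecIso (CommRingCat.of R)).hom).hom a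

lemma continuous_ev_s10 {X : Over (Spec (CommRingCat.of k))} (a : Γ(X.left, ⊤)) :
    @Continuous _ _ (affineTop k R X) _ (fun g => ev k R X g a) := by
  letI : TopologicalSpace (pts k R X) := affineTop k R X
  have h1 : Continuous fun (g : pts k R X) (b : Γ(X.left, ⊤)) => ev k R X g b :=
    continuous_induced_dom
  exact (continuous_apply a).comp h1

lemma continuous_comp_pts {X Y : Over (Spec (CommRingCat.of k))} (φ : X ⟶ Y) :
    @Continuous _ _ (affineTop k R X) (affineTop k R Y) (fun g => g ≫ φ) := by
  letI : TopologicalSpace (pts k R X) := affineTop k R X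
  letI : TopologicalSpace (pts k R Y) := affineTop k R Y
  apply continuous_induced_rng.2
  apply continuous_pi
  intro a
  exact (continuous_ev_s10 (R := R) (Scheme.Hom.appTop φ.left a)).congr
    (fun g => (ev_comp_s10 φ g a).symm)

/-! ### The affine line and the terminal object -/

variable (k) in
/-- The affine line over `k` as an object over `Spec k`. -/
def A1 : Over (Spec (CommRingCat.of k)) :=
  Over.mk (Spec.map (CommRingCat.ofHom (algebraMap k (Polynomial k))))

variable (k) in
/-- `Spec k` as the terminal object over itself. -/
def Zt : Over (Spec (CommRingCat.of k)) := Over.mk (𝟙 _)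

variable (k) in
/-- The structure morphism of the affine line. -/
def tA1 : A1 k ⟶ Zt k := Over.homMk (A1 k).hom

lemma pts_Zt_eq (g g' : pts k R (Zt k)) : g = g' :=
  Over.mkIdTerminal.hom_ext g g' 

/-! ### Morphisms to the affine line from global sections -/

variable (k) in
def cRing (W : Over (Spec (CommRingCat.of k))) : CommRingCat.of k ⟶ Γ(W.left, ⊤) :=
  (Scheme.ΓSpecIso (CommRingCat.of k)).inv ≫ W.hom.appTop

variable (k) in
def secRingHom (W : Over (Spec (CommRingCat.of k))) (s : Γ(W.left, ⊤)) :
    CommRingCat.of (Polynomial k) ⟶ Γ(W.left, ⊤) :=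
  CommRingCat.ofHom (Polynomial.eval₂RingHom (cRing k W).hom s)

lemma secRingHom_comp_alg (W : Over (Spec (CommRingCat.of k))) (s : Γ(W.left, ⊤)) :
    CommRingCat.ofHom (algebraMap k (Polynomial k)) ≫ secRingHom k W s = cRing k W := by
  ext x
  simp [secRingHom, cRing]

variable (k) in
/-- The morphism `W ⟶ 𝔸¹` corresponding to a global section `s` of `W`. -/
def secHom (W : Over (Spec (CommRingCat.of k))) (s : Γ(W.left, ⊤)) : W ⟶ A1 k :=
  Over.homMk (W.left.toSpecΓ ≫ Spec.map (secRingHom k W s)) (by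
    show (W.left.toSpecΓ ≫ Spec.map (secRingHom k W s)) ≫
        Spec.map (CommRingCat.ofHom (algebraMap k (Polynomial k))) = W.hom
    rw [Category.assoc, ← Spec.map_comp, secRingHom_comp_alg, cRing, Spec.map_comp,
      ← Category.assoc, ← Scheme.toSpecΓ_naturality, Category.assoc]
    show W.hom ≫ (Spec (CommRingCat.of k)).toSpecΓ ≫
        Spec.map (Scheme.ΓSpecIso (CommRingCat.of k)).inv = W.hom
    rw [← SpecMap_ΓSpecIso_hom, ← Spec.map_comp, Iso.inv_hom_id, Spec.map_id]
    simp)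

variable (k) in
/-- The distinguished global section of the affine line. -/
def xt : Γ((A1 k).left, ⊤) :=
  (Scheme.ΓSpecIso (CommRingCat.of (Polynomial k))).inv Polynomial.X

lemma secHom_appTop_xt (W : Over (Spec (CommRingCat.of k))) (s : Γ(W.left, ⊤)) :
    Scheme.Hom.appTop (secHom k W s).left (xt k) = s := by
  have h2 : (Scheme.ΓSpecIso Γ(W.left, ⊤)).inv (secRingHom k W s Polynomial.X)
      = Scheme.Hom.appTop (Spec.map (secRingHom k W s))
        ((Scheme.ΓSpecIso (CommRingCat.of (Polynomial k))).inv Polynomial.X) :=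
    congrArg (fun f => f Polynomial.X) (Scheme.ΓSpecIso_inv_naturality (secRingHom k W s))
  show Scheme.Hom.appTop W.left.toSpecΓ
    (Scheme.Hom.appTop (Spec.map (secRingHom k W s))
      ((Scheme.ΓSpecIso (CommRingCat.of (Polynomial k))).inv Polynomial.X)) = s
  rw [← h2]
  have hX : secRingHom k W s Polynomial.X = s := by
    show Polynomial.eval₂RingHom (cRing k W).hom s Polynomial.X = s
    simp
  show Scheme.Hom.appTop W.left.toSpecΓ
    ((Scheme.ΓSpecIso Γ(W.left, ⊤)).inv (secRingHom k W s Polynomial.X)) = s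
  rw [hX]
  have h3 : Scheme.Hom.appTop W.left.toSpecΓ ((Scheme.ΓSpecIso Γ(W.left, ⊤)).inv s)
      = (Scheme.ΓSpecIso Γ(W.left, ⊤)).hom ((Scheme.ΓSpecIso Γ(W.left, ⊤)).inv s) :=
    congrArg (fun f => f ((Scheme.ΓSpecIso Γ(W.left, ⊤)).inv s)) (Scheme.toSpecΓ_appTop W.left)
  rw [h3]
  exact congrArg (fun f => f s) (Scheme.ΓSpecIso Γ(W.left, ⊤)).inv_hom_id

lemma ev_secHom (W : Over (Spec (CommRingCat.of k))) (s : Γ(W.left, ⊤)) (g : pts k R W) :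
    ev k R (A1 k) (g ≫ secHom k W s) (xt k) = ev k R W g s := by
  rw [ev_comp_s10, secHom_appTop_xt]

/-! ### The bridge between `pts k R (A1 k)` and `Polynomial k →ₐ[k] R` -/

def ptRingHom (g : pts k R (A1 k)) : CommRingCat.of (Polynomial k) ⟶ CommRingCat.of R :=
  Spec.preimage g.left

lemma Spec_map_ptRingHom (g : pts k R (A1 k)) : Spec.map (ptRingHom g) = g.left :=
  Spec.map_preimage _

lemma ev_A1 (g : pts k R (A1 k)) (a : Γ((A1 k).left, ⊤)) :
    ev k R (A1 k) g a
      = ptRingHom g ((Scheme.ΓSpecIso (CommRingCat.of (Polynomial k))).hom a) := by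
  have h := Scheme.ΓSpecIso_naturality (ptRingHom g)
  have h2 := congrArg (fun f => f a) h
  simp only [CommRingCat.comp_apply] at h2
  rw [ev]
  show (Scheme.ΓSpecIso (CommRingCat.of R)).hom (Scheme.Hom.appTop g.left a) = _
  rw [← Spec_map_ptRingHom g]
  exact h2

/-- The canonical map `𝔸¹(R) → (k[X] →ₐ[k] R)`. -/
def ptToAlgHom (g : pts k R (A1 k)) : Polynomial k →ₐ[k] R :=
  { toRingHom := (ptRingHom g).hom
    commutes' := by
      intro c
      have hw : Spec.map (CommRingCat.ofHom (algebraMap k (Polynomial k)) ≫ ptRingHom g)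
          = Spec.map (CommRingCat.ofHom (algebraMap k R)) := by
        rw [Spec.map_comp, Spec_map_ptRingHom g]
        exact Over.w g
      have := Spec.map_injective hw
      exact congrArg (fun f => f.hom c) this }

/-- The canonical map `(k[X] →ₐ[k] R) → 𝔸¹(R)`. -/
def algHomToPt (f : Polynomial k →ₐ[k] R) : pts k R (A1 k) :=
  Over.homMk (Spec.map (CommRingCat.ofHom f.toRingHom)) (by
    show Spec.map (CommRingCat.ofHom f.toRingHom) ≫
        Spec.map (CommRingCat.ofHom (algebraMap k (Polynomial k)))
      = Spec.map (CommRingCat.ofHom (algebraMap k R))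
    rw [← Spec.map_comp]
    congr 1
    exact congrArg CommRingCat.ofHom (f.comp_algebraMap))

lemma ptToAlgHom_algHomToPt (f : Polynomial k →ₐ[k] R) : ptToAlgHom (algHomToPt f) = f := by
  apply AlgHom.coe_ringHom_injective
  show (ptRingHom (algHomToPt f)).hom = f.toRingHom
  have : (algHomToPt f).left = Spec.map (CommRingCat.ofHom f.toRingHom) := rfl
  rw [ptRingHom, this, Spec.preimage_map]
  rfl

lemma algHomToPt_ptToAlgHom (g : pts k R (A1 k)) : algHomToPt (ptToAlgHom g) = g := by
  apply Over.OverMorphism.ext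
  show Spec.map (CommRingCat.ofHom (ptToAlgHom g).toRingHom) = g.left
  rw [← Spec_map_ptRingHom g]
  exact congrArg Spec.map (CommRingCat.ofHom_hom _)

lemma ptToAlgHom_apply (g : pts k R (A1 k)) (a : Polynomial k) :
    ptToAlgHom g a
      = ev k R (A1 k) g ((Scheme.ΓSpecIso (CommRingCat.of (Polynomial k))).inv a) := by
  refine Eq.trans ?_ (ev_A1 g _).symm
  show ptRingHom g a = ptRingHom g _
  congr 1
  exact (congrArg (fun f => f a) (Scheme.ΓSpecIso (CommRingCat.of (Polynomial k))).inv_hom_id).symm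

lemma ev_algHomToPt (f : Polynomial k →ₐ[k] R) (a : Γ((A1 k).left, ⊤)) :
    ev k R (A1 k) (algHomToPt f) a
      = f ((Scheme.ΓSpecIso (CommRingCat.of (Polynomial k))).hom a) := by
  rw [ev_A1]
  show ptRingHom (algHomToPt f) _ = _
  have : (algHomToPt f).left = Spec.map (CommRingCat.ofHom f.toRingHom) := rfl
  rw [ptRingHom, this, Spec.preimage_map]
  rfl

variable (k R) in
/-- The bridge homeomorphism between `𝔸¹(R)` with the affine topology and
`k[X] →ₐ[k] R` with its affine topology. -/
def bridgeEquiv : pts k R (A1 k) ≃ (Polynomial k →ₐ[k] R) where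
  toFun := ptToAlgHom
  invFun := algHomToPt
  left_inv := algHomToPt_ptToAlgHom
  right_inv := ptToAlgHom_algHomToPt

variable (k R) in
/-- The bridge homeomorphism. -/
def bridgeHomeo :
    @Homeomorph (pts k R (A1 k)) (Polynomial k →ₐ[k] R) (affineTop k R (A1 k))
      (affineTopology k (Polynomial k) R) :=
  @Homeomorph.mk _ _ (affineTop k R (A1 k)) (affineTopology k (Polynomial k) R)
    (bridgeEquiv k R) (by
    letI : TopologicalSpace (pts k R (A1 k)) := affineTop k R (A1 k)
    letI : TopologicalSpace (Polynomial k →ₐ[k] R) := affineTopology k (Polynomial k) R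
    apply continuous_induced_rng.2
    apply continuous_pi
    intro a
    show Continuous fun g : pts k R (A1 k) => ptToAlgHom g a
    simpa only [Function.comp_def, ptToAlgHom_apply] using
      continuous_ev_s10 (k := k) (R := R) (X := A1 k)
        ((Scheme.ΓSpecIso (CommRingCat.of (Polynomial k))).inv a))
    (by
    letI : TopologicalSpace (pts k R (A1 k)) := affineTop k R (A1 k)
    letI : TopologicalSpace (Polynomial k →ₐ[k] R) := affineTopology k (Polynomial k) R
    apply continuous_induced_rng.2
    apply continuous_pi
    intro a
    show Continuous fun f : Polynomial k →ₐ[k] R => ev k R (A1 k) (algHomToPt f) a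
    have h : (fun f : Polynomial k →ₐ[k] R => ev k R (A1 k) (algHomToPt f) a)
        = fun f => f ((Scheme.ΓSpecIso (CommRingCat.of (Polynomial k))).hom a) := by
      funext f; exact ev_algHomToPt f a
    show Continuous fun f : Polynomial k →ₐ[k] R => ev k R (A1 k) (algHomToPt f) a
    rw [h]
    have h1 : Continuous fun (f : Polynomial k →ₐ[k] R) (b : Polynomial k) => f b :=
      continuous_induced_dom
    exact (continuous_apply _).comp h1)

end SchemePoints

open SchemePoints Topology

/-- if a `k`-algebra `R` with a topology satisfies, for all affine `k`-schemes
of finite type and with respect to the affine topologies, (F1) the canonical bijection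
`(X ×_Z Y)(R) → X(R) ×_{Z(R)} Y(R)` is a homeomorphism, (F2) the canonical bijection
`𝔸¹_k(R) → R` is a homeomorphism, and (F3) every closed immersion `Y → X` induces a closed
topological embedding `Y(R) → X(R)`, then `R` is a topological ring and its topology is
Hausdorff. -/
theorem statement_10 (k R : Type u) [CommRing k] [CommRing R] [Algebra k R]
    [TopologicalSpace R]
    (hF1 : ∀ (X Y Z : Over (Spec (CommRingCat.of k))),
      IsAffine X.left → IsAffine Y.left → IsAffine Z.left →
      LocallyOfFiniteType X.hom → LocallyOfFiniteType Y.hom → LocallyOfFiniteType Z.hom →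
      ∀ (φ : X ⟶ Z) (ψ : Y ⟶ Z),
        @IsHomeomorph (pts k R (fiberProdOver φ ψ))
          {p : pts k R X × pts k R Y // p.1 ≫ φ = p.2 ≫ ψ}
          (affineTop k R (fiberProdOver φ ψ))
          (fiberPtsTop (affineTop k R X) (affineTop k R Y) (fun p => p.1 ≫ φ = p.2 ≫ ψ))
          (fiberCompare R φ ψ))
    (hF2 : @IsHomeomorph (Polynomial k →ₐ[k] R) R (affineTopology k (Polynomial k) R) _
      (fun f => f Polynomial.X))
    (hF3 : ∀ (X Y : Over (Spec (CommRingCat.of k))),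
      IsAffine X.left → IsAffine Y.left →
      LocallyOfFiniteType X.hom → LocallyOfFiniteType Y.hom →
      ∀ φ : Y ⟶ X, IsClosedImmersion φ.left →
        @IsClosedEmbedding (pts k R Y) (pts k R X) (affineTop k R Y) (affineTop k R X)
          (fun g => g ≫ φ)) :
    IsTopologicalRing R ∧ T2Space R := by
  classical
  -- Affineness and finite-type facts
  haveI hA1aff : IsAffine (A1 k).left :=
    inferInstanceAs (IsAffine (Spec (CommRingCat.of (Polynomial k))))
  haveI hZtaff : IsAffine (Zt k).left :=
    inferInstanceAs (IsAffine (Spec (CommRingCat.of k)))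
  have hftalg : RingHom.FiniteType (algebraMap k (Polynomial k)) := by
    have h : (algebraMap k (Polynomial k)).toAlgebra = (inferInstance : Algebra k (Polynomial k)) := by
      apply Algebra.algebra_ext
      intro r
      rw [RingHom.algebraMap_toAlgebra]
    show @Algebra.FiniteType k (Polynomial k) _ _ (algebraMap k (Polynomial k)).toAlgebra
    rw [h]
    infer_instance
  haveI hA1ft : LocallyOfFiniteType (A1 k).hom := by
    show LocallyOfFiniteType (Spec.map (CommRingCat.ofHom (algebraMap k (Polynomial k))))
    rw [HasRingHomProperty.Spec_iff (P := @LocallyOfFiniteType)]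
    exact hftalg
  haveI hZtft : LocallyOfFiniteType (Zt k).hom :=
    inferInstanceAs (LocallyOfFiniteType (𝟙 (Spec (CommRingCat.of k))))
  set t : A1 k ⟶ Zt k := tA1 k with htdef
  have htft : LocallyOfFiniteType t.left := hA1ft
  set W : Over (Spec (CommRingCat.of k)) := fiberProdOver t t with hWdef
  haveI hWaff : IsAffine W.left := by
    show IsAffine (pullback t.left t.left)
    infer_instance
  haveI hWft : LocallyOfFiniteType W.hom := by
    show LocallyOfFiniteType (pullback.fst t.left t.left ≫ (A1 k).hom)
    haveI : LocallyOfFiniteType (pullback.fst t.left t.left) :=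
      inferInstance
    infer_instance
  -- topologies
  letI tA : TopologicalSpace (pts k R (A1 k)) := affineTop k R (A1 k)
  letI tW : TopologicalSpace (pts k R W) := affineTop k R W
  letI tS : TopologicalSpace {p : pts k R (A1 k) × pts k R (A1 k) // p.1 ≫ t = p.2 ≫ t} :=
    fiberPtsTop (affineTop k R (A1 k)) (affineTop k R (A1 k)) _
  -- the homeomorphism `W(R) ≃ₜ A1(R) ×_{Zt(R)} A1(R)` from (F1)
  have h1 := hF1 (A1 k) (A1 k) (Zt k) hA1aff hA1aff hZtaff hA1ft hA1ft hZtft t t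
  let hWS := h1.homeomorph (fiberCompare R t t)
  -- the subtype is everything
  have hcond : ∀ p : pts k R (A1 k) × pts k R (A1 k), p.1 ≫ t = p.2 ≫ t :=
    fun p => pts_Zt_eq _ _
  let subH : {p : pts k R (A1 k) × pts k R (A1 k) // p.1 ≫ t = p.2 ≫ t} ≃ₜ
      (pts k R (A1 k) × pts k R (A1 k)) :=
    { toEquiv := Equiv.subtypeUnivEquiv hcond
      continuous_toFun := continuous_induced_dom
      continuous_invFun := continuous_induced_rng.2 continuous_id }
  -- the evaluation homeomorphism `A1(R) ≃ₜ R`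
  letI tAlg : TopologicalSpace (Polynomial k →ₐ[k] R) := affineTopology k (Polynomial k) R
  let EH : @Homeomorph (pts k R (A1 k)) R (affineTop k R (A1 k)) _ :=
    (bridgeHomeo k R).trans (hF2.homeomorph _)
  have hEH : ∀ g : pts k R (A1 k), EH g = ev k R (A1 k) g (xt k) :=
    fun g => ptToAlgHom_apply g Polynomial.X
  -- projections
  have hval : ∀ g : pts k R W, (subH (hWS g) : pts k R (A1 k) × pts k R (A1 k))
      = (g ≫ fiberFst t t, g ≫ fiberSnd t t) := fun g => rfl
  -- the map sending a pair of points to a point of W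
  have hpair : ∀ q : pts k R (A1 k) × pts k R (A1 k),
      (hWS.symm (subH.symm q) ≫ fiberFst t t, hWS.symm (subH.symm q) ≫ fiberSnd t t) = q := by
    intro q
    rw [← hval]
    rw [Homeomorph.apply_symm_apply, Homeomorph.apply_symm_apply]
  -- continuity of a binary operation obtained from a section of W
  have key : ∀ s : Γ(W.left, ⊤), Continuous fun p : R × R =>
      ev k R W (hWS.symm (subH.symm (EH.symm p.1, EH.symm p.2))) s := by
    intro s
    have c1 : Continuous fun p : R × R => (EH.symm p.1, EH.symm p.2) :=
      (EH.symm.continuous.comp continuous_fst).prodMk (EH.symm.continuous.comp continuous_snd)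
    have c2 : Continuous fun p : R × R => hWS.symm (subH.symm (EH.symm p.1, EH.symm p.2)) :=
      hWS.symm.continuous.comp (subH.symm.continuous.comp c1)
    exact (continuous_ev_s10 (k := k) (R := R) (X := W) s).comp c2
  -- evaluation of sections at the constructed point
  have hevpair : ∀ (x y : R),
      ev k R W (hWS.symm (subH.symm (EH.symm x, EH.symm y)))
        (Scheme.Hom.appTop (fiberFst t t).left (xt k)) = x ∧
      ev k R W (hWS.symm (subH.symm (EH.symm x, EH.symm y)))
        (Scheme.Hom.appTop (fiberSnd t t).left (xt k)) = y := by
    intro x y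
    have h5 := hpair (EH.symm x, EH.symm y)
    have h6 : hWS.symm (subH.symm (EH.symm x, EH.symm y)) ≫ fiberFst t t = EH.symm x :=
      congrArg Prod.fst h5
    have h7 : hWS.symm (subH.symm (EH.symm x, EH.symm y)) ≫ fiberSnd t t = EH.symm y :=
      congrArg Prod.snd h5
    constructor
    · rw [← ev_comp_s10, h6, ← hEH, Homeomorph.apply_symm_apply]
    · rw [← ev_comp_s10, h7, ← hEH, Homeomorph.apply_symm_apply]
  -- multiplication is continuous
  have hmulc : Continuous fun p : R × R => p.1 * p.2 := by
    have hc := key (Scheme.Hom.appTop (fiberFst t t).left (xt k) *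
      Scheme.Hom.appTop (fiberSnd t t).left (xt k))
    convert hc using 1
    funext p
    rw [ev_mul, (hevpair p.1 p.2).1, (hevpair p.1 p.2).2]
  -- addition is continuous
  have haddc : Continuous fun p : R × R => p.1 + p.2 := by
    have hc := key (Scheme.Hom.appTop (fiberFst t t).left (xt k) +
      Scheme.Hom.appTop (fiberSnd t t).left (xt k))
    convert hc using 1
    funext p
    rw [ev_add, (hevpair p.1 p.2).1, (hevpair p.1 p.2).2]
  -- negation is continuous
  have hnegc : Continuous fun x : R => -x := by
    have hc : Continuous fun x : R => ev k R (A1 k) (EH.symm x ≫ secHom k (A1 k) (-(xt k))) (xt k) := by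
      have c2 : @Continuous _ _ tA tA (fun g => g ≫ secHom k (A1 k) (-(xt k))) :=
        continuous_comp_pts _
      exact (continuous_ev_s10 (k := k) (R := R) (X := A1 k) (xt k)).comp
        (c2.comp EH.symm.continuous)
    convert hc using 1
    funext x
    rw [ev_secHom, ev_neg, ← hEH, Homeomorph.apply_symm_apply]
  -- Hausdorffness via the diagonal
  let Δ : A1 k ⟶ W := Over.homMk (pullback.lift (𝟙 _) (𝟙 _) rfl) (by
    show pullback.lift (𝟙 _) (𝟙 _) rfl ≫ pullback.fst t.left t.left ≫ (A1 k).hom = (A1 k).hom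
    rw [pullback.lift_fst_assoc, Category.id_comp])
  have hΔci : IsClosedImmersion Δ.left := by
    show IsClosedImmersion (pullback.diagonal t.left)
    haveI : IsSeparated t.left := by
      show IsSeparated (Spec.map (CommRingCat.ofHom (algebraMap k (Polynomial k))))
      infer_instance
    infer_instance
  have hΔfst : Δ ≫ fiberFst t t = 𝟙 (A1 k) := by
    apply Over.OverMorphism.ext
    show pullback.lift (𝟙 _) (𝟙 _) rfl ≫ pullback.fst t.left t.left = 𝟙 _
    rw [pullback.lift_fst]
  have hΔsnd : Δ ≫ fiberSnd t t = 𝟙 (A1 k) := by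
    apply Over.OverMorphism.ext
    show pullback.lift (𝟙 _) (𝟙 _) rfl ≫ pullback.snd t.left t.left = 𝟙 _
    rw [pullback.lift_snd]
  have hΔemb := hF3 W (A1 k) hWaff hA1aff hWft hA1ft Δ hΔci
  have hdiagemb : IsClosedEmbedding fun x : R => (x, x) := by
    have hcj : IsClosedEmbedding fun g : pts k R (A1 k) => subH (hWS (g ≫ Δ)) :=
      (subH.isClosedEmbedding.comp hWS.isClosedEmbedding).comp hΔemb
    have hkey : (fun x : R => (x, x))
        = (Prod.map EH EH) ∘ (fun g : pts k R (A1 k) => subH (hWS (g ≫ Δ))) ∘ EH.symm := by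
      funext x
      show (x, x) = Prod.map EH EH (subH (hWS (EH.symm x ≫ Δ)))
      erw [hval]
      show (x, x) = (EH ((EH.symm x ≫ Δ) ≫ fiberFst t t), EH ((EH.symm x ≫ Δ) ≫ fiberSnd t t))
      rw [Category.assoc (EH.symm x), Category.assoc (EH.symm x), hΔfst, hΔsnd,
        Category.comp_id (EH.symm x),
        Homeomorph.apply_symm_apply]
    rw [hkey]
    exact ((EH.prodCongr EH).isClosedEmbedding.comp hcj).comp EH.symm.isClosedEmbedding
  have hdiagclosed : IsClosed (Set.diagonal R) := by
    rw [← Set.range_diag]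
    exact hdiagemb.isClosed_range
  haveI : ContinuousAdd R := ⟨haddc⟩
  haveI : ContinuousMul R := ⟨hmulc⟩
  haveI : ContinuousNeg R := ⟨hnegc⟩
  haveI : IsTopologicalSemiring R := IsTopologicalSemiring.mk
  constructor
  · exact IsTopologicalRing.mk
  · exact t2_iff_isClosed_diagonal.mpr hdiagclosed
end
end

section
/- Let k be a commutative ring and R a commutative k-algebra. Then R is a local ring if and only if for every k-scheme X and every open covering {U_i}_{i∈I} of X by open subschemes, every morphism Spec R → X over Spec k factors through the open immersion U_i → X for some i ∈ I (equivalently, X(R) = ⋃_{i∈I} U_i(R)). -/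
open AlgebraicGeometry CategoryTheory

universe u

/-- a commutative `k`-algebra `R` is a local ring if and only if for every
`k`-scheme `X` and every open covering `{U_i}` of `X` by open subschemes, every morphism
`Spec R → X` over `Spec k` factors through the open immersion `U_i → X` for some `i`
(i.e. `X(R) = ⋃ᵢ U_i(R)`). -/
theorem statement_11 (k R : Type u) [CommRing k] [CommRing R] [Algebra k R] :
    IsLocalRing R ↔
      ∀ (X : Scheme.{u}) (sX : X ⟶ Spec (CommRingCat.of k))
        (ι : Type u) (U : ι → X.Opens), (⨆ i, U i) = ⊤ →
        ∀ g : Spec (CommRingCat.of R) ⟶ X,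
          g ≫ sX = Spec.map (CommRingCat.ofHom (algebraMap k R)) →
          ∃ (i : ι) (h : Spec (CommRingCat.of R) ⟶ (U i : Scheme.{u})),
            h ≫ (U i).ι = g := by
  constructor
  · intro hloc X sX ι U hU g hg
    have hx : g.base (IsLocalRing.closedPoint R) ∈ ⨆ i, U i := hU ▸ trivial
    obtain ⟨i, hi⟩ := TopologicalSpace.Opens.mem_iSup.mp hx
    have hrange : Set.range g.base ⊆ (U i : Set X) := by
      rintro _ ⟨p, rfl⟩
      exact ((IsLocalRing.specializes_closedPoint (R := R) p).map
        g.base.hom.continuous).mem_open (U i).2 hi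
    refine ⟨i, IsOpenImmersion.lift (U i).ι g ?_, IsOpenImmersion.lift_fac _ _ _⟩
    rwa [Scheme.Opens.range_ι]
  · intro h
    -- surjectivity consequence
    have key : ∀ (ι : Type u) (U : ι → (Spec (CommRingCat.of R)).Opens),
        (⨆ i, U i) = ⊤ → ∃ i, ∀ p, p ∈ U i := by
      intro ι U hU
      obtain ⟨i, f, hf⟩ := h (Spec (CommRingCat.of R))
        (Spec.map (CommRingCat.ofHom (algebraMap k R))) ι U hU (𝟙 _) (Category.id_comp _)
      refine ⟨i, fun p => ?_⟩
      have : (U i).ι.base (f.base p) = p := by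
        change (f ≫ (U i).ι).base p = p
        rw [hf]; rfl
      rw [← this]
      show (U i).ι.base (f.base p) ∈ (U i : Set _)
      rw [← Scheme.Opens.range_ι (U := U i)]
      exact ⟨f.base p, rfl⟩
    have ntr : Nontrivial R := by
      by_contra hn
      rw [not_nontrivial_iff_subsingleton] at hn
      have hempty : IsEmpty (Spec (CommRingCat.of R)).carrier :=
        inferInstanceAs (IsEmpty (PrimeSpectrum R))
      obtain ⟨i, _⟩ := key PEmpty PEmpty.elim (by
        ext p
        exact (hempty.false p).elim)
      exact i.elim
    apply IsLocalRing.of_isUnit_or_isUnit_one_sub_self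
    intro a
    have unit_of : ∀ b : R, (∀ p : PrimeSpectrum R, b ∉ p.asIdeal) → IsUnit b := by
      intro b hb
      by_contra hbu
      obtain ⟨m, hm, hle⟩ := Ideal.exists_le_maximal (Ideal.span {b})
        (by simpa [Ideal.span_singleton_eq_top] using hbu)
      exact hb ⟨m, hm.isPrime⟩ (hle (Ideal.subset_span rfl))
    have hcov : (⨆ i : ULift.{u} Bool, (if i.down then PrimeSpectrum.basicOpen a
        else PrimeSpectrum.basicOpen ((1 : R) - a) : (Spec (CommRingCat.of R)).Opens)) = ⊤ := by
      rw [eq_top_iff]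
      rintro p -
      by_cases hp : a ∈ p.asIdeal
      · refine TopologicalSpace.Opens.mem_iSup.mpr ⟨⟨false⟩, ?_⟩
        simp only [if_neg Bool.false_ne_true, PrimeSpectrum.mem_basicOpen]
        intro hc
        exact p.isPrime.ne_top (Ideal.eq_top_iff_one _ |>.mpr
          (by simpa using p.asIdeal.add_mem hp hc))
      · exact TopologicalSpace.Opens.mem_iSup.mpr ⟨⟨true⟩, by show p ∈ PrimeSpectrum.basicOpen a; exact hp⟩
    obtain ⟨i, hi⟩ := key (ULift Bool) _ hcov
    by_cases hb : i.down
    · refine Or.inl (unit_of a fun p hp => ?_)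
      have := hi p
      simp only [hb, ↓reduceIte] at this
      exact this hp
    · refine Or.inr (unit_of _ fun p hp => ?_)
      have := hi p
      simp only [hb, ↓reduceIte] at this
      exact this hp
end

section
/- Let k be a commutative ring and R a k-algebra that is a local ring and a topological ring with R^× open in R and inversion R^× → R^× continuous for the subspace topology. Then every open immersion φ : Y → X of k-schemes induces an open topological embedding φ_R : Y(R) → X(R) (a homeomorphism onto an open subset) with respect to the fine topologies. -/
open AlgebraicGeometry CategoryTheory CategoryTheory.Limits Opposite TopologicalSpace

universe u

noncomputable section

open SchemePoints Topology

set_option linter.unusedSectionVars false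
open AlgebraicGeometry CategoryTheory CategoryTheory.Limits Opposite TopologicalSpace
open SchemePoints Topology IsLocalRing

namespace SchemePoints13

variable (k R : Type u) [CommRing k] [CommRing R] [Algebra k R] [TopologicalSpace R]

lemma ev_def (X : Over (Spec (CommRingCat.of k))) (g : pts k R X) (a : Γ(X.left, ⊤)) :
    ev k R X g a = (Scheme.ΓSpecIso (CommRingCat.of R)).hom (g.left.appTop a) := rfl

lemma ev_mul (X : Over (Spec (CommRingCat.of k))) (g : pts k R X) (a b : Γ(X.left, ⊤)) :
    ev k R X g (a * b) = ev k R X g a * ev k R X g b := by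
  simp [ev_def, map_mul]
  exact map_mul _ _ _

lemma ev_pow (X : Over (Spec (CommRingCat.of k))) (g : pts k R X) (a : Γ(X.left, ⊤)) (n : ℕ) :
    ev k R X g (a ^ n) = ev k R X g a ^ n := by
  simp [ev_def, map_pow]
  exact map_pow _ _ _

variable [IsLocalRing R]

instance : IsLocalRing ↑(CommRingCat.of R) := inferInstanceAs (IsLocalRing R)

lemma mem_basicOpen_iff_isUnit (X : Over (Spec (CommRingCat.of k))) (g : pts k R X)
    (a : Γ(X.left, ⊤)) :
    g.left.base (closedPoint R) ∈ X.left.basicOpen a ↔ IsUnit (ev k R X g a) := by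
  have h1 : g.left.base (closedPoint R) ∈ X.left.basicOpen a ↔
      closedPoint R ∈ g.left ⁻¹ᵁ X.left.basicOpen a := Iff.rfl
  rw [h1, Scheme.preimage_basicOpen_top]
  show closedPoint R ∈ (Spec (CommRingCat.of R)).basicOpen (g.left.appTop a) ↔ _
  erw [basicOpen_eq_of_affine',
    PrimeSpectrum.mem_basicOpen]
  constructor
  · intro h; by_contra hu
    exact h (IsLocalRing.mem_maximalIdeal _ |>.mpr hu)
  · intro h hm
    exact (IsLocalRing.mem_maximalIdeal _ |>.mp hm) h

end SchemePoints13

namespace SchemePoints13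

variable {k R : Type u} [CommRing k] [CommRing R] [Algebra k R] [TopologicalSpace R]

lemma range_subset_iff' [IsLocalRing R] {Z : Scheme} (h : (specOver k R).left ⟶ Z)
    {W : Set Z} (hW : IsOpen W) :
    Set.range h.base ⊆ W ↔ h.base (closedPoint R) ∈ W := by
  constructor
  · intro H; exact H ⟨_, rfl⟩
  · rintro H _ ⟨x, rfl⟩
    exact ((IsLocalRing.specializes_closedPoint x).map h.base.hom.continuous).mem_open hW H

/-- Lift a point along an open immersion in the over category. -/
def liftOver {X Y : Over (Spec (CommRingCat.of k))} (φ : Y ⟶ X) [IsOpenImmersion φ.left]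
    (h : pts k R X) (H : Set.range h.left.base ⊆ Set.range φ.left.base) : pts k R Y :=
  Over.homMk (IsOpenImmersion.lift φ.left h.left H)
    (by rw [← Over.w φ, IsOpenImmersion.lift_fac_assoc, Over.w h])

@[simp] lemma liftOver_comp {X Y : Over (Spec (CommRingCat.of k))} (φ : Y ⟶ X)
    [IsOpenImmersion φ.left] (h : pts k R X) (H) :
    (liftOver φ h H : pts k R Y) ≫ φ = h := by
  apply Over.OverMorphism.ext
  erw [Over.comp_left]
  show (liftOver φ h H).left ≫ φ.left = h.left
  simp [liftOver]

lemma comp_injective {X Y : Over (Spec (CommRingCat.of k))} (φ : Y ⟶ X)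
    [IsOpenImmersion φ.left] :
    Function.Injective (fun g : pts k R Y => g ≫ φ) := by
  intro g g' h
  apply Over.OverMorphism.ext
  have := congrArg CommaMorphism.left h
  simp only [Over.comp_left] at this
  exact (cancel_mono φ.left).mp this

end SchemePoints13

namespace SchemePoints13

variable {k R : Type u} [CommRing k] [CommRing R] [Algebra k R] [TopologicalSpace R]

/-- The basic open subscheme as an object over `Spec k`. -/
def basicOver (U : Over (Spec (CommRingCat.of k))) (a : Γ(U.left, ⊤)) :
    Over (Spec (CommRingCat.of k)) :=
  Over.mk ((U.left.basicOpen a).ι ≫ U.hom)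

lemma basicOver_left (U : Over (Spec (CommRingCat.of k))) (a : Γ(U.left, ⊤)) :
    (basicOver U a).left = (U.left.basicOpen a).toScheme := rfl

instance (U : Over (Spec (CommRingCat.of k))) [IsAffine U.left] (a : Γ(U.left, ⊤)) :
    IsAffine (basicOver U a).left :=
  (isAffineOpen_top U.left).basicOpen a

/-- The inclusion of the basic open subscheme, over `Spec k`. -/
def basicInc (U : Over (Spec (CommRingCat.of k))) (a : Γ(U.left, ⊤)) :
    basicOver U a ⟶ U :=
  Over.homMk (U.left.basicOpen a).ι rfl

instance (U : Over (Spec (CommRingCat.of k))) (a : Γ(U.left, ⊤)) :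
    IsOpenImmersion (basicInc U a).left :=
  inferInstanceAs (IsOpenImmersion (U.left.basicOpen a).ι)

variable [IsLocalRing R]

/-- Restrict a point landing in a basic open to the basic open subscheme. -/
def restrictPt {U : Over (Spec (CommRingCat.of k))} {a : Γ(U.left, ⊤)} (g : pts k R U)
    (hg : IsUnit (ev k R U g a)) : pts k R (basicOver U a) :=
  liftOver (basicInc U a) g (by
    show Set.range g.left.base ⊆ Set.range (U.left.basicOpen a).ι.base
    rw [Scheme.Opens.range_ι]
    exact (range_subset_iff' g.left (U.left.basicOpen a).isOpen).mpr
      ((mem_basicOpen_iff_isUnit k R U g a).mpr hg))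

@[simp] lemma restrictPt_comp {U : Over (Spec (CommRingCat.of k))} {a : Γ(U.left, ⊤)}
    (g : pts k R U) (hg : IsUnit (ev k R U g a)) :
    restrictPt g hg ≫ basicInc U a = g :=
  liftOver_comp _ _ _

lemma ev_comp {X Y : Over (Spec (CommRingCat.of k))} (ψ : Y ⟶ X) (g : pts k R Y)
    (c : Γ(X.left, ⊤)) :
    ev k R X (g ≫ ψ) c = ev k R Y g (ψ.left.appTop c) := by
  show (Scheme.ΓSpecIso (CommRingCat.of R)).hom ((g ≫ ψ).left.appTop c) = _
  erw [Over.comp_left, Scheme.Hom.comp_appTop]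
  rfl

lemma ev_restrictPt_res {U : Over (Spec (CommRingCat.of k))} {a : Γ(U.left, ⊤)}
    (g : pts k R U) (hg : IsUnit (ev k R U g a)) (c : Γ(U.left, ⊤)) :
    ev k R (basicOver U a) (restrictPt g hg) ((U.left.basicOpen a).ι.appTop c)
      = ev k R U g c := by
  conv_rhs => rw [← restrictPt_comp g hg]
  rw [ev_comp]
  rfl

end SchemePoints13

namespace SchemePoints13

variable {k R : Type u} [CommRing k] [CommRing R] [Algebra k R] [TopologicalSpace R]

lemma exists_res_eq (U : Over (Spec (CommRingCat.of k))) [IsAffine U.left]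
    (a : Γ(U.left, ⊤)) (b : Γ((U.left.basicOpen a).toScheme, ⊤)) :
    ∃ (n : ℕ) (c : Γ(U.left, ⊤)),
      b * (U.left.basicOpen a).ι.appTop (a ^ n) = (U.left.basicOpen a).ι.appTop c := by
  haveI := isLocalization_away_of_isAffine (X := U.left) a
  obtain ⟨⟨c, s⟩, h⟩ := IsLocalization.surj (M := Submonoid.powers a)
    (S := Γ(U.left, U.left.basicOpen a)) ((U.left.basicOpen a).topIso.hom b)
  obtain ⟨n, hn⟩ := s.2
  refine ⟨n, c, ?_⟩
  have keym : (U.left.basicOpen a).ι.appTop ≫ (U.left.basicOpen a).topIso.hom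
      = U.left.presheaf.map (homOfLE <| U.left.basicOpen_le a).op := by
    rw [Scheme.Opens.ι_appTop, Scheme.Opens.topIso_hom]
    erw [← Functor.map_comp]
    rfl
  have key : ∀ x : Γ(U.left, ⊤),
      (U.left.basicOpen a).topIso.inv
        (algebraMap Γ(U.left, ⊤) Γ(U.left, U.left.basicOpen a) x)
      = (U.left.basicOpen a).ι.appTop x := by
    intro x
    have hx : algebraMap Γ(U.left, ⊤) Γ(U.left, U.left.basicOpen a) x
        = ((U.left.basicOpen a).ι.appTop ≫ (U.left.basicOpen a).topIso.hom) x := by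
      rw [keym]; rfl
    rw [hx, CommRingCat.comp_apply, Iso.hom_inv_id_apply]
  have h2 := congrArg (U.left.basicOpen a).topIso.inv h
  rw [map_mul, key, key, Iso.hom_inv_id_apply] at h2
  rw [← hn] at h2
  exact h2

lemma ev_restrictPt [IsLocalRing R] {U : Over (Spec (CommRingCat.of k))} {a : Γ(U.left, ⊤)}
    (g : pts k R U) (hg : IsUnit (ev k R U g a)) {n : ℕ} {c : Γ(U.left, ⊤)}
    (b : Γ((U.left.basicOpen a).toScheme, ⊤))
    (hb : b * (U.left.basicOpen a).ι.appTop (a ^ n) = (U.left.basicOpen a).ι.appTop c) :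
    ev k R (basicOver U a) (restrictPt g hg) b
      = ev k R U g c * Ring.inverse (ev k R U g a) ^ n := by
  have h1 : ev k R (basicOver U a) (restrictPt g hg) b * ev k R U g a ^ n
      = ev k R U g c := by
    rw [← ev_pow, ← ev_restrictPt_res g hg (a ^ n), ← ev_restrictPt_res g hg c,
      ]
    erw [← ev_mul, hb]
  have hu : ev k R U g a ^ n * Ring.inverse (ev k R U g a) ^ n = 1 := by
    rw [← mul_pow, Ring.mul_inverse_cancel _ hg, one_pow]
  calc ev k R (basicOver U a) (restrictPt g hg) b
      = ev k R (basicOver U a) (restrictPt g hg) b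
        * (ev k R U g a ^ n * Ring.inverse (ev k R U g a) ^ n) := by rw [hu, mul_one]
    _ = (ev k R (basicOver U a) (restrictPt g hg) b * ev k R U g a ^ n)
        * Ring.inverse (ev k R U g a) ^ n := by ring
    _ = ev k R U g c * Ring.inverse (ev k R U g a) ^ n := by rw [h1]

end SchemePoints13

namespace SchemePoints13

variable {k R : Type u} [CommRing k] [CommRing R] [Algebra k R] [TopologicalSpace R]

lemma continuous_ev (X : Over (Spec (CommRingCat.of k))) (a : Γ(X.left, ⊤)) :
    @Continuous _ _ (affineTop k R X) _ (fun g => ev k R X g a) := by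
  letI := affineTop k R X
  have h : Continuous (fun g : pts k R X => (fun a : Γ(X.left, ⊤) => ev k R X g a)) :=
    continuous_induced_dom
  exact (continuous_apply a).comp h

lemma isOpen_unitSet (hunits : IsOpen {r : R | IsUnit r})
    (X : Over (Spec (CommRingCat.of k))) (a : Γ(X.left, ⊤)) :
    IsOpen[affineTop k R X] {g | IsUnit (ev k R X g a)} := by
  letI := affineTop k R X
  exact hunits.preimage (continuous_ev X a)

lemma continuous_restrictPt [IsTopologicalRing R] [IsLocalRing R]
    (hinv : ContinuousOn (fun r : R => Ring.inverse r) {r : R | IsUnit r})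
    (U : Over (Spec (CommRingCat.of k))) [IsAffine U.left] (a : Γ(U.left, ⊤)) :
    @Continuous {g : pts k R U // IsUnit (ev k R U g a)} (pts k R (basicOver U a))
      (@instTopologicalSpaceSubtype _ _ (affineTop k R U)) (affineTop k R (basicOver U a))
      (fun g => restrictPt g.1 g.2) := by
  letI := affineTop k R U
  letI := affineTop k R (basicOver U a)
  apply continuous_induced_rng.2
  apply continuous_pi
  intro b
  obtain ⟨n, c, hb⟩ := exists_res_eq U a b
  show Continuous (fun g : {g : pts k R U // IsUnit (ev k R U g a)} =>
    ev k R (basicOver U a) (restrictPt g.1 g.2) b)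
  have heq : (fun g : {g : pts k R U // IsUnit (ev k R U g a)} =>
      ev k R (basicOver U a) (restrictPt g.1 g.2) b)
      = fun g => ev k R U g.1 c * Ring.inverse (ev k R U g.1 a) ^ n :=
    funext fun g => ev_restrictPt g.1 g.2 b hb
  rw [heq]
  have h1 : Continuous fun g : {g : pts k R U // IsUnit (ev k R U g a)} => ev k R U g.1 c :=
    (continuous_ev U c).comp continuous_subtype_val
  have h2 : Continuous fun g : {g : pts k R U // IsUnit (ev k R U g a)} =>
      Ring.inverse (ev k R U g.1 a) := by
    have h3 : ContinuousOn (fun g : pts k R U => Ring.inverse (ev k R U g a))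
        {g | IsUnit (ev k R U g a)} :=
      hinv.comp (continuous_ev U a).continuousOn (fun g hg => hg)
    exact continuousOn_iff_continuous_restrict.mp h3
  exact h1.mul (h2.pow n)

lemma isOpen_fineTop_iff (X : Over (Spec (CommRingCat.of k))) (S : Set (pts k R X)) :
    IsOpen[fineTop k R X] S ↔ ∀ (U : Over (Spec (CommRingCat.of k))),
      IsAffine U.left → ∀ ψ : U ⟶ X, IsOpen[affineTop k R U] ((fun g => g ≫ ψ) ⁻¹' S) := by
  rw [fineTop]
  simp only [isOpen_iSup_iff, isOpen_coinduced]
  exact Iff.rfl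

lemma continuous_comp_fine (U X : Over (Spec (CommRingCat.of k))) (hU : IsAffine U.left)
    (ψ : U ⟶ X) :
    Continuous[affineTop k R U, fineTop k R X] (fun g => g ≫ ψ) := by
  erw [continuous_iff_coinduced_le]
  exact le_iSup_of_le U (le_iSup_of_le hU (le_iSup
    (fun φ => (affineTop k R U).coinduced (fun g => g ≫ φ)) ψ))

end SchemePoints13

namespace SchemePoints13

variable {k R : Type u} [CommRing k] [CommRing R] [Algebra k R] [TopologicalSpace R]

/-- The map from a basic open of `U` into `Y`, for `ψ : U ⟶ X` landing (on the basic open)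
inside the image of the open immersion `φ : Y ⟶ X`. -/
def basicToY {X Y : Over (Spec (CommRingCat.of k))} (φ : Y ⟶ X) [IsOpenImmersion φ.left]
    {U : Over (Spec (CommRingCat.of k))} (ψ : U ⟶ X) (a : Γ(U.left, ⊤))
    (h : U.left.basicOpen a ≤ ψ.left ⁻¹ᵁ φ.left.opensRange) :
    basicOver U a ⟶ Y :=
  Over.homMk (IsOpenImmersion.lift φ.left ((U.left.basicOpen a).ι ≫ ψ.left) (by
      rintro _ ⟨x, rfl⟩
      have h1 : (U.left.basicOpen a).ι.base x ∈ U.left.basicOpen a := x.2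
      have h2 := h h1
      exact h2))
    (by
      erw [← Over.w φ, IsOpenImmersion.lift_fac_assoc, Category.assoc, Over.w ψ]
      rfl)

lemma restrict_basicToY [IsLocalRing R] {X Y : Over (Spec (CommRingCat.of k))} (φ : Y ⟶ X)
    [IsOpenImmersion φ.left] {U : Over (Spec (CommRingCat.of k))} (ψ : U ⟶ X)
    (a : Γ(U.left, ⊤)) (h : U.left.basicOpen a ≤ ψ.left ⁻¹ᵁ φ.left.opensRange)
    (g : pts k R U) (hg : IsUnit (ev k R U g a)) :
    (restrictPt g hg ≫ basicToY φ ψ a h) ≫ φ = g ≫ ψ := by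
  apply Over.OverMorphism.ext
  erw [Over.comp_left, Over.comp_left, Category.assoc]
  have e1 : (basicToY φ ψ a h).left ≫ φ.left = (U.left.basicOpen a).ι ≫ ψ.left := by
    show IsOpenImmersion.lift φ.left ((U.left.basicOpen a).ι ≫ ψ.left) _ ≫ φ.left = _
    erw [IsOpenImmersion.lift_fac]
  have e2 : (restrictPt g hg).left ≫ (U.left.basicOpen a).ι = g.left := by
    have h3 := congrArg CommaMorphism.left (restrictPt_comp g hg)
    exact h3
  erw [e1, ← Category.assoc, e2]
  rfl

end SchemePoints13

namespace SchemePoints13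

variable {k R : Type u} [CommRing k] [CommRing R] [Algebra k R] [TopologicalSpace R]
variable [IsTopologicalRing R] [IsLocalRing R]

lemma isOpenMap_comp_fine (hunits : IsOpen {r : R | IsUnit r})
    (hinv : ContinuousOn (fun r : R => Ring.inverse r) {r : R | IsUnit r})
    {X Y : Over (Spec (CommRingCat.of k))} (φ : Y ⟶ X) [IsOpenImmersion φ.left] :
    @IsOpenMap (pts k R Y) (pts k R X) (fineTop k R Y) (fineTop k R X)
      (fun g => g ≫ φ) := by
  letI := fineTop k R Y
  intro S hS
  rw [isOpen_fineTop_iff]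
  intro U hU ψ
  haveI := hU
  letI := affineTop k R U
  have hT : ((fun g : pts k R U => g ≫ ψ) ⁻¹' ((fun g : pts k R Y => g ≫ φ) '' S))
      = ⋃ (a : Γ(U.left, ⊤)) (h : U.left.basicOpen a ≤ ψ.left ⁻¹ᵁ φ.left.opensRange),
          Subtype.val '' ((fun g : {g : pts k R U // IsUnit (ev k R U g a)} =>
            restrictPt g.1 g.2 ≫ basicToY φ ψ a h) ⁻¹' S) := by
    ext g
    simp only [Set.mem_preimage, Set.mem_image, Set.mem_iUnion]
    constructor
    · rintro ⟨h, hhS, hfh⟩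
      have hcp : g.left.base (closedPoint R) ∈ (ψ.left ⁻¹ᵁ φ.left.opensRange) := by
        show ψ.left.base (g.left.base (closedPoint R)) ∈ φ.left.opensRange
        have heq : ψ.left.base (g.left.base (closedPoint R))
            = φ.left.base (h.left.base (closedPoint R)) := by
          have h4 := congrArg (fun t : pts k R X => t.left.base (closedPoint R)) hfh
          simp only [Over.comp_left, Scheme.Hom.comp_apply] at h4
          exact h4.symm
        rw [heq]
        exact ⟨_, rfl⟩
      obtain ⟨a, hle, hmem⟩ := (isAffineOpen_top U.left).exists_basicOpen_le
        (V := ψ.left ⁻¹ᵁ φ.left.opensRange) ⟨g.left.base (closedPoint R), hcp⟩ trivial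
      have hga : IsUnit (ev k R U g a) := (mem_basicOpen_iff_isUnit k R U g a).mp hmem
      refine ⟨a, hle, ⟨g, hga⟩, ?_, rfl⟩
      have hkey : restrictPt g hga ≫ basicToY φ ψ a hle = h := by
        apply comp_injective φ
        show (restrictPt g hga ≫ basicToY φ ψ a hle) ≫ φ = h ≫ φ
        rw [restrict_basicToY, hfh]
      show restrictPt g hga ≫ basicToY φ ψ a hle ∈ S
      rw [hkey]; exact hhS
    · rintro ⟨a, hle, ⟨g₀, hg₀⟩, hgS, hval⟩
      cases hval
      exact ⟨restrictPt g₀ hg₀ ≫ basicToY φ ψ a hle, hgS, restrict_basicToY φ ψ a hle g₀ hg₀⟩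
  erw [hT]
  refine isOpen_iUnion fun a => isOpen_iUnion fun hle => ?_
  refine (isOpen_unitSet hunits U a).isOpenMap_subtype_val _ ?_
  have hcont : @Continuous {g : pts k R U // IsUnit (ev k R U g a)} (pts k R Y)
      (@instTopologicalSpaceSubtype _ _ (affineTop k R U)) (fineTop k R Y)
      (fun g => restrictPt g.1 g.2 ≫ basicToY φ ψ a hle) :=
    @Continuous.comp _ _ _ (@instTopologicalSpaceSubtype _ _ (affineTop k R U))
      (affineTop k R (basicOver U a)) (fineTop k R Y) _ _
      (continuous_comp_fine (basicOver U a) Y inferInstance (basicToY φ ψ a hle))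
      (continuous_restrictPt hinv U a)
  exact IsOpen.preimage hcont hS

end SchemePoints13

open SchemePoints13 in
theorem aux_main (k R : Type u) [CommRing k] [CommRing R] [Algebra k R]
    [TopologicalSpace R] [IsTopologicalRing R] [IsLocalRing R]
    (hunits : IsOpen {r : R | IsUnit r})
    (hinv : ContinuousOn (fun r : R => Ring.inverse r) {r : R | IsUnit r})
    (X Y : Over (Spec (CommRingCat.of k))) (φ : Y ⟶ X) (hφ : IsOpenImmersion φ.left) :
    @IsOpenEmbedding (pts k R Y) (pts k R X) (fineTop k R Y) (fineTop k R X)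
      (fun g => g ≫ φ) := by
  haveI := hφ
  letI tY := fineTop k R Y
  letI tX := fineTop k R X
  refine IsOpenEmbedding.of_continuous_injective_isOpenMap ?_ (comp_injective φ) ?_
  · apply continuous_iSup_dom.2; intro U
    apply continuous_iSup_dom.2; intro hU
    apply continuous_iSup_dom.2; intro ψ
    apply continuous_coinduced_dom.2
    exact continuous_comp_fine U X hU (ψ ≫ φ)
  · exact isOpenMap_comp_fine hunits hinv φ

/-- if `R` is a `k`-algebra which is a local topological ring whose unit group
`Rˣ` is open in `R` and on which inversion is continuous for the subspace topology, then every
open immersion `φ : Y → X` of `k`-schemes induces an open topological embedding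
`φ_R : Y(R) → X(R)` with respect to the fine topologies. -/
theorem statement_13 (k R : Type u) [CommRing k] [CommRing R] [Algebra k R]
    [TopologicalSpace R] [IsTopologicalRing R] [IsLocalRing R]
    (hunits : IsOpen {r : R | IsUnit r})
    (hinv : ContinuousOn (fun r : R => Ring.inverse r) {r : R | IsUnit r})
    (X Y : Over (Spec (CommRingCat.of k))) (φ : Y ⟶ X) (hφ : IsOpenImmersion φ.left) :
    @IsOpenEmbedding (pts k R Y) (pts k R X) (fineTop k R Y) (fineTop k R X)
      (fun g => g ≫ φ) :=
  aux_main k R hunits hinv X Y φ hφ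
end
end

section
/- Let k be a commutative ring and R a commutative k-algebra that is with maximally disconnected spectrum. Let X be a k-scheme with a finite affine open covering {U_i}_{i∈I}, let U = ∐_{i∈I} U_i be the disjoint union and Ψ : U → X the induced morphism. Then the induced map Ψ_R : U(R) → X(R) is surjective; that is, every morphism Spec R → X over Spec k factors through Ψ. -/
open AlgebraicGeometry CategoryTheory CategoryTheory.Limits

universe u

/-- A commutative ring `R` is *with maximally disconnected spectrum* if any two distinct
closed points `x` and `y` of `Spec R` have respective open neighbourhoods `U₁` and `U₂`
such that `Spec R` is the disjoint union of `U₁` and `U₂`. -/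
def WithMaximallyDisconnectedSpectrum (R : Type*) [CommRing R] : Prop :=
  ∀ x y : PrimeSpectrum R, IsClosed ({x} : Set (PrimeSpectrum R)) →
    IsClosed ({y} : Set (PrimeSpectrum R)) → x ≠ y →
    ∃ U₁ U₂ : Set (PrimeSpectrum R), IsOpen U₁ ∧ IsOpen U₂ ∧ x ∈ U₁ ∧ y ∈ U₂ ∧
      U₁ ∪ U₂ = Set.univ ∧ U₁ ∩ U₂ = ∅

section Topo
variable {R : Type u} [CommRing R]

lemma exists_specializes_closed (z : PrimeSpectrum R) :
    ∃ x : PrimeSpectrum R, z ⤳ x ∧ IsClosed ({x} : Set (PrimeSpectrum R)) := by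
  obtain ⟨M, hM, hle⟩ := z.asIdeal.exists_le_maximal z.isPrime.ne_top
  exact ⟨⟨M, hM.isPrime⟩, (PrimeSpectrum.le_iff_specializes _ _).1 hle,
    (PrimeSpectrum.isClosed_singleton_iff_isMaximal _).2 hM⟩

lemma mem_clopens_specializes (hR : WithMaximallyDisconnectedSpectrum R)
    {x z : PrimeSpectrum R} (hx : IsClosed ({x} : Set (PrimeSpectrum R)))
    (hz : ∀ W : Set (PrimeSpectrum R), IsClopen W → x ∈ W → z ∈ W) : z ⤳ x := by
  obtain ⟨y, hzy, hy⟩ := exists_specializes_closed z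
  rcases eq_or_ne y x with rfl | hne
  · exact hzy
  obtain ⟨U₁, U₂, hU₁, hU₂, hyU, hxU, huniv, hint⟩ := hR y x hy hx hne
  have hclopen : IsClopen U₂ := by
    constructor
    · rw [← isOpen_compl_iff]
      have : U₂ᶜ = U₁ := by
        apply Set.eq_of_subset_of_subset
        · intro a ha
          have := (Set.eq_univ_iff_forall.1 huniv) a
          rcases this with h | h
          · exact h
          · exact absurd h ha
        · intro a ha hmem
          exact absurd (Set.mem_inter ha hmem) (by simp [hint])
      rw [this]; exact hU₁
    · exact hU₂
  have hzU₂ : z ∈ U₂ := hz U₂ hclopen hxU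
  have hyU₂ : y ∈ U₂ := hzy.mem_closed hclopen.isClosed hzU₂
  exact absurd (Set.mem_inter hyU hyU₂) (by simp [hint])

lemma exists_clopen_subset (hR : WithMaximallyDisconnectedSpectrum R)
    {x : PrimeSpectrum R} (hx : IsClosed ({x} : Set (PrimeSpectrum R)))
    {V : Set (PrimeSpectrum R)} (hV : IsOpen V) (hxV : x ∈ V) :
    ∃ W : Set (PrimeSpectrum R), IsClopen W ∧ x ∈ W ∧ W ⊆ V := by
  have hempty : (Set.univ : Set (PrimeSpectrum R)) ∩
      ⋂ W : {W : Set (PrimeSpectrum R) // IsClopen W ∧ x ∈ W}, (W.1 ∩ Vᶜ) = ∅ := by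
    rw [Set.univ_inter, Set.eq_empty_iff_forall_notMem]
    rintro z hzmem
    have hz : ∀ W : Set (PrimeSpectrum R), IsClopen W → x ∈ W → z ∈ W := by
      intro W hW hxW
      exact (Set.mem_iInter.1 hzmem ⟨W, hW, hxW⟩).1
    have : z ⤳ x := mem_clopens_specializes hR hx hz
    exact (Set.mem_iInter.1 hzmem ⟨Set.univ, isClopen_univ, trivial⟩).2 (this.mem_open hV hxV)
  obtain ⟨t, ht⟩ := isCompact_univ.elim_finite_subfamily_closed _
    (fun W : {W : Set (PrimeSpectrum R) // IsClopen W ∧ x ∈ W} =>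
      (W.2.1.isClosed.inter (isClosed_compl_iff.2 hV))) hempty
  refine ⟨⋂ W ∈ t, W.1, ?_, ?_, ?_⟩
  · exact isClopen_biInter_finset fun W _ => W.2.1
  · apply Set.mem_biInter
    intro W _
    exact W.2.2
  intro z hzW
  by_contra hzV
  have : z ∈ (Set.univ : Set (PrimeSpectrum R)) ∩ ⋂ W ∈ t, (W.1 ∩ Vᶜ) := by
    refine ⟨trivial, Set.mem_biInter fun W hW => ⟨Set.mem_iInter₂.1 hzW W hW, hzV⟩⟩
  rw [ht] at this
  exact this

lemma clopen_partition (hR : WithMaximallyDisconnectedSpectrum R)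
    {ι : Type u} [Fintype ι] (V : ι → Set (PrimeSpectrum R)) (hV : ∀ i, IsOpen (V i))
    (hcov : ⋃ i, V i = Set.univ) :
    ∃ B : ι → Set (PrimeSpectrum R), (∀ i, IsClopen (B i)) ∧ (∀ i, B i ⊆ V i) ∧
      (⋃ i, B i = Set.univ) ∧ Pairwise fun i j => B i ∩ B j = ∅ := by
  classical
  -- step: every point lies in a clopen set contained in some V i
  have step : ∀ z : PrimeSpectrum R, ∃ W : Set (PrimeSpectrum R),
      IsClopen W ∧ z ∈ W ∧ ∃ i, W ⊆ V i := by
    intro z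
    obtain ⟨x, hzx, hx⟩ := exists_specializes_closed z
    have : x ∈ ⋃ i, V i := hcov ▸ Set.mem_univ x
    obtain ⟨i, hi⟩ := Set.mem_iUnion.1 this
    obtain ⟨W, hW, hxW, hWV⟩ := exists_clopen_subset hR hx (hV i) hi
    exact ⟨W, hW, hzx.mem_open hW.isOpen hxW, i, hWV⟩
  choose W hWclopen hWmem idx hWsub using step
  obtain ⟨t, ht⟩ := isCompact_univ.elim_finite_subcover (fun z => W z)
    (fun z => (hWclopen z).isOpen) (fun z _ => Set.mem_iUnion.2 ⟨z, hWmem z⟩)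
  -- A i : union of the W z with idx z = i
  set A : ι → Set (PrimeSpectrum R) := fun i => ⋃ z ∈ t.filter (fun z => idx z = i), W z with hA
  have hAclopen : ∀ i, IsClopen (A i) :=
    fun i => isClopen_biUnion_finset fun z _ => hWclopen z
  have hAsub : ∀ i, A i ⊆ V i := by
    intro i z hz
    obtain ⟨w, hw, hzw⟩ := Set.mem_iUnion₂.1 hz
    have := (Finset.mem_filter.1 hw).2
    exact this ▸ hWsub w hzw
  have hAcov : ⋃ i, A i = Set.univ := by
    apply Set.eq_univ_of_univ_subset
    intro z hz
    obtain ⟨w, hw, hzw⟩ := Set.mem_iUnion₂.1 (ht hz)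
    exact Set.mem_iUnion.2 ⟨idx w, Set.mem_iUnion₂.2 ⟨w, Finset.mem_filter.2 ⟨hw, rfl⟩, hzw⟩⟩
  -- disjointify
  let e := Fintype.equivFin ι
  refine ⟨fun i => A i \ ⋃ j ∈ Finset.univ.filter (fun j => e j < e i), A j, ?_, ?_, ?_, ?_⟩
  · exact fun i => (hAclopen i).diff (isClopen_biUnion_finset fun j _ => hAclopen j)
  · exact fun i => (Set.diff_subset).trans (hAsub i)
  · apply Set.eq_univ_of_univ_subset
    intro z hz
    have hzA : z ∈ ⋃ i, A i := hAcov ▸ Set.mem_univ z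
    obtain ⟨i0, hi0⟩ := Set.mem_iUnion.1 hzA
    -- take minimal e i among those with z ∈ A i
    have hne : (Finset.univ.filter (fun i => z ∈ A i)).Nonempty :=
      ⟨i0, Finset.mem_filter.2 ⟨Finset.mem_univ _, hi0⟩⟩
    obtain ⟨i, hi, hmin⟩ := Finset.exists_min_image _ (fun i => e i) hne
    refine Set.mem_iUnion.2 ⟨i, (Finset.mem_filter.1 hi).2, ?_⟩
    intro hmem
    obtain ⟨j, hj, hzj⟩ := Set.mem_iUnion₂.1 hmem
    have hjlt := (Finset.mem_filter.1 hj).2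
    have := hmin j (Finset.mem_filter.2 ⟨Finset.mem_univ _, hzj⟩)
    omega
  · intro i j hij
    rcases lt_or_gt_of_ne (fun h : e i = e j => hij (e.injective h)) with h | h
    · rw [Set.eq_empty_iff_forall_notMem]
      rintro z ⟨⟨hzi, -⟩, ⟨-, hnj⟩⟩
      exact hnj (Set.mem_iUnion₂.2 ⟨i, Finset.mem_filter.2 ⟨Finset.mem_univ _, h⟩, hzi⟩)
    · rw [Set.eq_empty_iff_forall_notMem]
      rintro z ⟨⟨-, hni⟩, ⟨hzj, -⟩⟩
      exact hni (Set.mem_iUnion₂.2 ⟨j, Finset.mem_filter.2 ⟨Finset.mem_univ _, h⟩, hzj⟩)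

end Topo

/-- let `R` be a commutative `k`-algebra with maximally disconnected spectrum,
`X` a `k`-scheme with a finite affine open covering `{U_i}`, `U = ∐ᵢ U_i` the disjoint union
and `Ψ : U → X` the induced morphism. Then every morphism `Spec R → X` over `Spec k` factors
through `Ψ`, i.e. `Ψ_R : U(R) → X(R)` is surjective. -/
theorem statement_17 (k R : Type u) [CommRing k] [CommRing R] [Algebra k R]
    (hR : WithMaximallyDisconnectedSpectrum R)
    (X : Scheme.{u}) (sX : X ⟶ Spec (CommRingCat.of k))
    (ι : Type u) [Fintype ι] (U : ι → X.Opens)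
    (hU : ∀ i, IsAffineOpen (U i)) (hcov : (⨆ i, U i) = ⊤)
    (g : Spec (CommRingCat.of R) ⟶ X)
    (hg : g ≫ sX = Spec.map (CommRingCat.ofHom (algebraMap k R))) :
    ∃ h : Spec (CommRingCat.of R) ⟶ ∐ (fun i => ((U i : Scheme.{u}))),
      h ≫ Sigma.desc (fun i => (U i).ι) = g := by

  classical
  have S : Unit := ()
  -- the preimages of the U i form an open cover of Spec R
  have hVcov : ⋃ i, ((g ⁻¹ᵁ U i : (Spec (CommRingCat.of R)).Opens) : Set (Spec (CommRingCat.of R))) = Set.univ := by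
    apply Set.eq_univ_of_forall
    intro x
    have : g.base x ∈ (⊤ : X.Opens) := trivial
    rw [← hcov, TopologicalSpace.Opens.mem_iSup] at this
    obtain ⟨i, hi⟩ := this
    exact Set.mem_iUnion.2 ⟨i, hi⟩
  obtain ⟨B, hBclopen, hBsub, hBcov, hBdisj⟩ := clopen_partition (R := R) hR
    (fun i => ((g ⁻¹ᵁ U i : (Spec (CommRingCat.of R)).Opens) : Set (Spec (CommRingCat.of R)))) (fun i => (g ⁻¹ᵁ U i).2) hVcov
  set Z : ι → (Spec (CommRingCat.of R)).Opens := fun i => ⟨B i, (hBclopen i).isOpen⟩ with hZ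
  -- lift of the restriction of g to Z i through U i
  have hrange : ∀ i, Set.range ((Z i).ι ≫ g).base ⊆ Set.range (U i).ι.base := by
    intro i
    rw [Scheme.Hom.comp_base, TopCat.coe_comp, Set.range_comp, Scheme.Opens.range_ι,
      Scheme.Opens.range_ι]
    intro x hx
    obtain ⟨y, hy, rfl⟩ := hx
    exact hBsub i hy
  set flift : ∀ i, ((Z i : Scheme.{u}) ⟶ (U i : Scheme.{u})) :=
    fun i => IsOpenImmersion.lift (U i).ι ((Z i).ι ≫ g) (hrange i) with hflift
  -- the open cover of Spec R by the Z i
  set 𝒰 : (Spec (CommRingCat.of R)).OpenCover :=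
    Scheme.Cover.mkOfCovers ι (fun i => (Z i : Scheme.{u})) (fun i => (Z i).ι)
      (fun x => by
        obtain ⟨j, hj⟩ := Set.mem_iUnion.1 (hBcov ▸ Set.mem_univ x)
        have : x ∈ Set.range (Z j).ι := by rw [Scheme.Opens.range_ι]; exact hj
        exact ⟨j, this⟩) with h𝒰
  set F : ∀ i, ((Z i : Scheme.{u}) ⟶ ∐ (fun i => ((U i : Scheme.{u})))) :=
    fun i => flift i ≫ Sigma.ι (fun i => ((U i : Scheme.{u}))) i with hF
  have hcompat : ∀ i j, pullback.fst (𝒰.f i) (𝒰.f j) ≫ F i =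
      pullback.snd (𝒰.f i) (𝒰.f j) ≫ F j := by
    intro i j
    rcases eq_or_ne i j with rfl | hij
    · have : pullback.fst (𝒰.f i) (𝒰.f i) = pullback.snd (𝒰.f i) (𝒰.f i) := by
        rw [← cancel_mono (𝒰.f i)]
        exact pullback.condition
      rw [this]
    · have hem : IsEmpty (pullback (𝒰.f i) (𝒰.f j) : Scheme.{u}) := by
        constructor
        intro p
        have h1 : (𝒰.f i).base ((pullback.fst (𝒰.f i) (𝒰.f j)).base p) ∈ B i := by
          have := Set.mem_range_self (f := (𝒰.f i).base)
            ((pullback.fst (𝒰.f i) (𝒰.f j)).base p)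
          rwa [show Set.range (𝒰.f i).base = B i from Scheme.Opens.range_ι (Z i)] at this
        have h2 : (𝒰.f i).base ((pullback.fst (𝒰.f i) (𝒰.f j)).base p) ∈ B j := by
          have hc : (pullback.fst (𝒰.f i) (𝒰.f j)) ≫ 𝒰.f i =
              (pullback.snd (𝒰.f i) (𝒰.f j)) ≫ 𝒰.f j := pullback.condition
          have hcp := congrArg (fun f : (pullback (𝒰.f i) (𝒰.f j) : Scheme.{u}) ⟶ Spec (CommRingCat.of R) =>
            f.base p) hc
          simp only [Scheme.Hom.comp_base, TopCat.comp_app] at hcp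
          rw [hcp]
          have := Set.mem_range_self (f := (𝒰.f j).base)
            ((pullback.snd (𝒰.f i) (𝒰.f j)).base p)
          rwa [show Set.range (𝒰.f j).base = B j from Scheme.Opens.range_ι (Z j)] at this
        have hd := hBdisj hij
        simp only [Set.eq_empty_iff_forall_notMem] at hd
        exact hd _ ⟨h1, h2⟩
      exact (@isInitialOfIsEmpty _ hem).hom_ext _ _
  refine ⟨𝒰.glueMorphisms F hcompat, ?_⟩
  apply 𝒰.hom_ext
  intro i
  rw [← Category.assoc, show 𝒰.f i ≫ 𝒰.glueMorphisms F hcompat = F i from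
    Scheme.Cover.ι_glueMorphisms _ _ _ i, hF]
  simp only [Category.assoc, Sigma.ι_desc]
  rw [hflift]
  exact (Category.assoc _ _ _).trans ((congrArg _ (Sigma.ι_desc _ _)).trans
    (IsOpenImmersion.lift_fac _ _ (hrange i)))
end

section
/- Let k be a commutative ring and R a commutative k-algebra. Suppose that for every k-scheme X with a finite affine open covering {U_i}_{i∈I}, every morphism Spec R → X over Spec k factors through the induced morphism Ψ : ∐_{i∈I} U_i → X from the disjoint union. Then for every n ≥ 1 and all elements h_1, …, h_n ∈ R with 1 = h_1 + ⋯ + h_n, there exist idempotent elements e_1, …, e_n ∈ R with e_i contained in the principal ideal (h_i) for each i and 1 = e_1 + ⋯ + e_n; in particular, R is with maximally disconnected spectrum. -/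
open AlgebraicGeometry CategoryTheory CategoryTheory.Limits

universe u

lemma aux_clopen_range {ι : Type u} (f : ι → Scheme.{u}) (i : ι) :
    IsClopen (Set.range (Sigma.ι f i).base) := by
  have h1 : ⇑(Sigma.ι f i).base = (sigmaMk f) ∘ (Sigma.mk i) :=
    funext fun x => (sigmaMk_mk f i x).symm
  rw [h1, Set.range_comp]
  exact ⟨(Homeomorph.isClosed_image _).mpr isClopen_range_sigmaMk.1,
    (Homeomorph.isOpen_image _).mpr isClopen_range_sigmaMk.2⟩

lemma aux_idem_nil {R : Type*} [CommRing R] {x : R} (hx : IsIdempotentElem x)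
    (hn : IsNilpotent x) : x = 0 := by
  obtain ⟨m, hm⟩ := hn
  calc x = x ^ (m + 1) := (hx.pow_succ_eq m).symm
    _ = x ^ m * x := pow_succ x m
    _ = 0 := by rw [hm, zero_mul]


/-- let `R` be a commutative `k`-algebra such that for every `k`-scheme `X`
with a finite affine open covering `{U_i}`, every morphism `Spec R → X` over `Spec k` factors
through the induced morphism `Ψ : ∐ᵢ U_i → X`. Then for every `n ≥ 1` and all
`h₁, …, hₙ ∈ R` with `1 = h₁ + ⋯ + hₙ` there exist idempotent elements `eᵢ ∈ (hᵢ)` with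
`1 = e₁ + ⋯ + eₙ`; in particular, `R` is with maximally disconnected spectrum. -/
theorem statement_18 (k R : Type u) [CommRing k] [CommRing R] [Algebra k R]
    (H : ∀ (X : Scheme.{u}) (sX : X ⟶ Spec (CommRingCat.of k))
      (ι : Type u) (_ : Fintype ι) (U : ι → X.Opens),
      (∀ i, IsAffineOpen (U i)) → (⨆ i, U i) = ⊤ →
      ∀ g : Spec (CommRingCat.of R) ⟶ X,
        g ≫ sX = Spec.map (CommRingCat.ofHom (algebraMap k R)) →
        ∃ h : Spec (CommRingCat.of R) ⟶ ∐ (fun i => ((U i : Scheme.{u}))),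
          h ≫ Sigma.desc (fun i => (U i).ι) = g) :
    (∀ n : ℕ, 1 ≤ n → ∀ hs : Fin n → R, (∑ i, hs i) = 1 →
      ∃ e : Fin n → R, (∀ i, IsIdempotentElem (e i)) ∧
        (∀ i, e i ∈ Ideal.span {hs i}) ∧ (∑ i, e i) = 1) ∧
    WithMaximallyDisconnectedSpectrum R := by
  have key : ∀ n : ℕ, 1 ≤ n → ∀ hs : Fin n → R, (∑ i, hs i) = 1 →
      ∃ e : Fin n → R, (∀ i, IsIdempotentElem (e i)) ∧
        (∀ i, e i ∈ Ideal.span {hs i}) ∧ (∑ i, e i) = 1 := by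
    intro n _ hs hsum
    set X : Scheme.{u} := Spec (CommRingCat.of R) with hX
    let U : ULift.{u} (Fin n) → X.Opens := fun i => PrimeSpectrum.basicOpen (hs i.down)
    have hUaff : ∀ i, IsAffineOpen (U i) := fun i => IsAffineOpen.Spec_basicOpen (R := CommRingCat.of R) (hs i.down)
    have hUcov : (⨆ i, U i) = ⊤ := by
      change (⨆ i, PrimeSpectrum.basicOpen ((fun j : ULift.{u} (Fin n) => hs j.down) i)) = (⊤ : TopologicalSpace.Opens (PrimeSpectrum R))
      rw [PrimeSpectrum.iSup_basicOpen_eq_top_iff, Ideal.eq_top_iff_one, ← hsum]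
      exact Ideal.sum_mem _ fun i _ => Ideal.subset_span ⟨ULift.up i, rfl⟩
    obtain ⟨h, hh⟩ := H X (Spec.map (CommRingCat.ofHom (algebraMap k R))) (ULift.{u} (Fin n))
      inferInstance U hUaff hUcov (𝟙 X) (Category.id_comp _)
    let f : ULift.{u} (Fin n) → Scheme.{u} := fun i => ((U i : Scheme.{u}))
    let C : Fin n → Set (PrimeSpectrum R) :=
      fun i => h.base ⁻¹' (Set.range (Sigma.ι f (ULift.up i)).base)
    have hCclopen : ∀ i, IsClopen (C i) :=
      fun i => (aux_clopen_range f (ULift.up i)).preimage h.base.hom.continuous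
    have hCsub : ∀ i, C i ⊆ (PrimeSpectrum.basicOpen (hs i) : Set (PrimeSpectrum R)) := by
      intro i x hx
      obtain ⟨y, hy⟩ := hx
      have heq : ((Sigma.ι f (ULift.up i) ≫ Sigma.desc fun j => (U j).ι)).base y = x := by
        rw [Scheme.Hom.comp_apply, hy, ← Scheme.Hom.comp_apply (X := X) h _ x, hh]
        rfl
      rw [Sigma.ι_desc] at heq
      have : x ∈ Set.range ((U (ULift.up i)).ι).base := ⟨y, heq⟩
      rwa [Scheme.Opens.range_ι] at this
    have hCcover : ∀ x : PrimeSpectrum R, ∃ i, x ∈ C i := by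
      intro x
      obtain ⟨⟨i, y⟩, hy⟩ := (sigmaMk f).surjective (h.base x)
      exact ⟨i.down, ⟨y, (sigmaMk_mk f _ y).symm.trans hy⟩⟩
    have hCdisj : ∀ i j, i ≠ j → C i ∩ C j = ∅ := by
      intro i j hij
      ext x
      simp only [Set.mem_inter_iff, Set.mem_empty_iff_false, iff_false, not_and]
      rintro ⟨y, hy⟩ ⟨z, hz⟩
      rw [← hz] at hy
      have hmk := (sigmaι_eq_iff f (ULift.up i) (ULift.up j) y z).mp hy
      exact hij (congrArg ULift.down (Sigma.mk.inj_iff.mp hmk).1)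
    have he : ∀ i, ∃ e : R, IsIdempotentElem e ∧
        C i = (PrimeSpectrum.basicOpen e : Set (PrimeSpectrum R)) := fun i =>
      PrimeSpectrum.exists_idempotent_basicOpen_eq_of_isClopen (hCclopen i)
    choose e hid hCe using he
    -- orthogonality
    have horth : ∀ i j, i ≠ j → e i * e j = 0 := by
      intro i j hij
      have hbot : PrimeSpectrum.basicOpen (e i * e j) = ⊥ := by
        rw [PrimeSpectrum.basicOpen_mul]
        apply TopologicalSpace.Opens.ext
        have : (PrimeSpectrum.basicOpen (e i) : Set (PrimeSpectrum R)) ∩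
            (PrimeSpectrum.basicOpen (e j) : Set (PrimeSpectrum R)) = ∅ := by
          rw [← hCe i, ← hCe j]; exact hCdisj i j hij
        simpa using this
      have hnil : IsNilpotent (e i * e j) := (PrimeSpectrum.basicOpen_eq_bot_iff _).mp hbot
      have hidem : IsIdempotentElem (e i * e j) := (hid i).mul_of_commute (Commute.all _ _) (hid j)
      exact aux_idem_nil hidem hnil
    -- membership in span
    have hmem : ∀ i, e i ∈ Ideal.span {hs i} := by
      intro i
      have hle : PrimeSpectrum.basicOpen (e i) ≤ PrimeSpectrum.basicOpen (hs i) := by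
        rw [← SetLike.coe_subset_coe, ← hCe i]
        exact hCsub i
      have hrad : e i ∈ (Ideal.span ({hs i} : Set R)).radical :=
        (PrimeSpectrum.basicOpen_le_basicOpen_iff _ _).mp hle
      obtain ⟨m, hm⟩ := hrad
      match m with
      | 0 =>
        have : (1 : R) ∈ Ideal.span ({hs i} : Set R) := by simpa using hm
        exact (Ideal.eq_top_iff_one _).mpr this ▸ Submodule.mem_top
      | m + 1 =>
        rw [(hid i).pow_succ_eq m] at hm
        exact hm
    -- sum is one
    have hsum1 : (∑ i, e i) = 1 := by
      have hone : ∀ p : PrimeSpectrum R, (1 - ∑ i, e i) ∈ p.asIdeal := by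
        intro p
        obtain ⟨i, hi⟩ := hCcover p
        rw [hCe i, SetLike.mem_coe, PrimeSpectrum.mem_basicOpen] at hi
        have hprod : (1 - ∑ j, e j) * e i = 0 := by
          rw [sub_mul, one_mul, Finset.sum_mul]
          rw [Finset.sum_eq_single i (fun j _ hj => horth j i hj) (by simp)]
          rw [hid i]
          ring
        have := p.asIdeal.zero_mem
        rw [← hprod] at this
        exact ((Ideal.IsPrime.mul_mem_iff_mem_or_mem p.isPrime).mp this).resolve_right hi
      have hnil : IsNilpotent (1 - ∑ i, e i) := by
        rw [← mem_nilradical, nilradical_eq_sInf]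
        exact Ideal.mem_sInf.mpr fun {J} hJ =>
          letI : J.IsPrime := hJ
          hone ⟨J, hJ⟩
      have hsidem : IsIdempotentElem (∑ i, e i) := by
        unfold IsIdempotentElem
        rw [Finset.sum_mul_sum]
        rw [Finset.sum_congr rfl (fun i _ => Finset.sum_eq_single i
          (fun j _ hj => horth i j (Ne.symm hj)) (by simp))]
        exact Finset.sum_congr rfl fun i _ => hid i
      have h0 : (1 : R) - ∑ i, e i = 0 := aux_idem_nil hsidem.one_sub hnil
      have := sub_eq_zero.mp h0
      exact this.symm
    exact ⟨e, hid, hmem, hsum1⟩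
  refine ⟨key, ?_⟩
  intro x y hx hy hxy
  have hxm : x.asIdeal.IsMaximal := (PrimeSpectrum.isClosed_singleton_iff_isMaximal x).mp hx
  have hym : y.asIdeal.IsMaximal := (PrimeSpectrum.isClosed_singleton_iff_isMaximal y).mp hy
  have hne : x.asIdeal ≠ y.asIdeal := fun hcon => hxy (PrimeSpectrum.ext hcon)
  have hsup : x.asIdeal ⊔ y.asIdeal = ⊤ :=
    Ideal.IsMaximal.coprime_of_ne hxm hym hne
  have h1 : (1 : R) ∈ x.asIdeal ⊔ y.asIdeal := hsup ▸ Submodule.mem_top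
  obtain ⟨a, ha, b, hb, hab⟩ := Submodule.mem_sup.mp h1
  obtain ⟨e, hid, hmem, hsum⟩ := key 2 (by norm_num) ![b, a] (by
    rw [Fin.sum_univ_two]; show b + a = 1; rw [add_comm]; exact hab)
  have he0 : e 0 ∈ y.asIdeal := by
    have := hmem 0
    simp only [Matrix.cons_val_zero] at this
    exact Ideal.span_le.mpr (by simpa using hb) this
  have he1 : e 1 ∈ x.asIdeal := by
    have := hmem 1
    simp only [Matrix.cons_val_one, Matrix.head_cons] at this
    exact Ideal.span_le.mpr (by simpa using ha) this
  rw [Fin.sum_univ_two] at hsum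
  refine ⟨(PrimeSpectrum.basicOpen (e 0) : Set (PrimeSpectrum R)),
    (PrimeSpectrum.basicOpen (e 1) : Set (PrimeSpectrum R)),
    (PrimeSpectrum.basicOpen (e 0)).isOpen, (PrimeSpectrum.basicOpen (e 1)).isOpen, ?_, ?_, ?_, ?_⟩
  · rw [SetLike.mem_coe, PrimeSpectrum.mem_basicOpen]
    intro hcon
    exact x.isPrime.ne_top (x.asIdeal.eq_top_iff_one.mpr (hsum ▸ Ideal.add_mem _ hcon he1))
  · rw [SetLike.mem_coe, PrimeSpectrum.mem_basicOpen]
    intro hcon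
    exact y.isPrime.ne_top (y.asIdeal.eq_top_iff_one.mpr (hsum ▸ Ideal.add_mem _ he0 hcon))
  · ext p
    simp only [Set.mem_union, Set.mem_univ, iff_true, SetLike.mem_coe,
      PrimeSpectrum.mem_basicOpen]
    by_contra hcon
    push_neg at hcon
    obtain ⟨h0, h1⟩ := hcon
    exact p.isPrime.ne_top (p.asIdeal.eq_top_iff_one.mpr
      (hsum ▸ Ideal.add_mem _ h0 h1))
  · ext p
    simp only [Set.mem_inter_iff, Set.mem_empty_iff_false, iff_false, not_and,
      SetLike.mem_coe, PrimeSpectrum.mem_basicOpen]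
    intro h0 h1
    have hprod : e 0 * e 1 = 0 := by
      have h2 : e 1 = 1 - e 0 := by rw [← hsum]; ring
      rw [h2, mul_sub, mul_one, (hid 0), sub_self]
    exact h0 (((Ideal.IsPrime.mul_mem_iff_mem_or_mem p.isPrime).mp
      (hprod ▸ p.asIdeal.zero_mem)).resolve_right h1)
end
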